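/- arXiv:1512.08946 — 5 statements merged into one kernel-verified Lean document; each statement's English description precedes it below -/
import Mathlib

section
/- For any full-rank lattice L in R^n with Gaussian mass Θ = Σ_{v∈L} e^{-π‖v‖²} and any x ∈ R^n, one has Σ_{v∈L} e^{-π‖x−v‖²} ≤ Θ, i.e. the Gaussian sum over a translated lattice is maximized at the trivial translate. -/
open scoped Real
open Real

set_option maxHeartbeats 1000000 in
theorem summable_gauss {n : ℕ} (L : Submodule ℤ (EuclideanSpace ℝ (Fin n)))
    [DiscreteTopology L] [IsZLattice ℝ L]
    (h₁ : Summable fun v : L => Real.exp (-π * ‖(v : EuclideanSpace ℝ (Fin n))‖ ^ 2))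
    {c : ℝ} (hc : 0 < c) :
    Summable fun v : L => Real.exp (-c * ‖(v : EuclideanSpace ℝ (Fin n))‖ ^ 2) := by
  classical
  set b := Module.Free.chooseBasis ℤ L with hb
  set ι := Module.Free.ChooseBasisIndex ℤ L
  obtain ⟨m, hm⟩ := exists_nat_ge (Real.sqrt (2 * π / c))
  have hπk : π ≤ c * ((m:ℝ)+1)^2 / 2 := by
    have h0 : (0:ℝ) ≤ 2 * π / c := by positivity
    have hs1 : Real.sqrt (2 * π / c) ≤ (m:ℝ)+1 := by linarith
    have h2 : 2 * π / c ≤ ((m:ℝ)+1)^2 := by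
      rw [← Real.sq_sqrt h0]
      exact pow_le_pow_left₀ (Real.sqrt_nonneg _) hs1 2
    rw [div_le_iff₀ hc] at h2
    have h3 : ((m:ℝ)+1)^2 * c = c * ((m:ℝ)+1)^2 := mul_comm _ _
    linarith
  set pr : L → (ι → ZMod (m+1)) := fun a i => ((b.repr a i : ZMod (m+1))) with hpr
  have key : ∀ a a₀ : L, pr a = pr a₀ → ∃ w : L, a = a₀ + ((m:ℤ)+1) • w := by
    intro a a₀ h
    have hdvd : ∀ i, ((m:ℤ)+1) ∣ (b.repr a i - b.repr a₀ i) := by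
      intro i
      have h0 : (((b.repr a i - b.repr a₀ i : ℤ)) : ZMod (m+1)) = 0 := by
        have hcoord : ((b.repr a i : ZMod (m+1))) = (b.repr a₀ i : ZMod (m+1)) := congrFun h i
        push_cast
        rw [hcoord]
        ring
      have := (ZMod.intCast_zmod_eq_zero_iff_dvd _ (m+1)).mp h0
      exact_mod_cast this
    refine ⟨b.equivFun.symm (fun i => (b.repr a i - b.repr a₀ i) / ((m:ℤ)+1)), ?_⟩
    apply b.equivFun.injective
    ext i
    simp only [map_add, map_smul, Pi.add_apply, Pi.smul_apply, LinearEquiv.apply_symm_apply,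
      Module.Basis.equivFun_apply, smul_eq_mul]
    rw [Int.mul_ediv_cancel' (hdvd i)]
    ring
  apply (Equiv.sigmaFiberEquiv pr).summable_iff.mp
  refine (summable_sigma_of_nonneg fun _ => (Real.exp_pos _).le).mpr ⟨?_, ?_⟩
  · intro q
    simp only [Function.comp_apply, Equiv.sigmaFiberEquiv, Equiv.coe_fn_mk]
    by_cases hq : Nonempty {a : L // pr a = q}
    · obtain ⟨⟨a₀, ha₀⟩⟩ := hq
      have hdiv : ∀ a : {a : L // pr a = q}, ∃ w : L, (a : L) = a₀ + ((m:ℤ)+1) • w :=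
        fun a => key a a₀ (a.2.trans ha₀.symm)
      set φ : {a : L // pr a = q} → L := fun a => (hdiv a).choose with hφ
      have hspec : ∀ a : {a : L // pr a = q}, (a : L) = a₀ + ((m:ℤ)+1) • φ a :=
        fun a => (hdiv a).choose_spec
      have hinj : Function.Injective φ := by
        intro a a' h
        exact Subtype.ext (by rw [hspec a, hspec a', h])
      have hsum := h₁.comp_injective hinj
      apply Summable.of_nonneg_of_le (fun _ => (Real.exp_pos _).le) _
        (hsum.mul_left (Real.exp (c * ‖(a₀ : EuclideanSpace ℝ (Fin n))‖^2)))
      intro a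
      simp only [Function.comp_apply]
      rw [← Real.exp_add]
      apply Real.exp_le_exp.mpr
      have hco : ((a : L) : EuclideanSpace ℝ (Fin n)) =
          (a₀ : EuclideanSpace ℝ (Fin n)) +
            ((m:ℝ)+1) • ((φ a : L) : EuclideanSpace ℝ (Fin n)) := by
        have h := congrArg (fun t : L => (t : EuclideanSpace ℝ (Fin n))) (hspec a)
        simp only [Submodule.coe_add, SetLike.val_smul] at h
        rw [h, ← Int.cast_smul_eq_zsmul ℝ]
        norm_cast
      set A := ‖((a : L) : EuclideanSpace ℝ (Fin n))‖ with hA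
      set B := ‖(a₀ : EuclideanSpace ℝ (Fin n))‖ with hB
      set W := ‖((φ a : L) : EuclideanSpace ℝ (Fin n))‖ with hW
      have h1 : ((m:ℝ)+1) * W ≤ A + B := by
        have hsub : ((m:ℝ)+1) • ((φ a : L) : EuclideanSpace ℝ (Fin n)) =
            ((a : L) : EuclideanSpace ℝ (Fin n)) - (a₀ : EuclideanSpace ℝ (Fin n)) := by
          rw [hco]; abel
        calc ((m:ℝ)+1) * W = ‖((m:ℝ)+1) • ((φ a : L) : EuclideanSpace ℝ (Fin n))‖ := by
              rw [norm_smul, Real.norm_eq_abs, abs_of_pos (by positivity)]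
          _ = ‖((a : L) : EuclideanSpace ℝ (Fin n)) - (a₀ : EuclideanSpace ℝ (Fin n))‖ := by
              rw [hsub]
          _ ≤ A + B := norm_sub_le _ _
      have h2 : π * W^2 ≤ c * A^2 + c * B^2 := by
        have hA0 : 0 ≤ A := norm_nonneg _
        have hB0 : 0 ≤ B := norm_nonneg _
        have hW0 : 0 ≤ W := norm_nonneg _
        have s1 : (((m:ℝ)+1) * W)^2 ≤ (A + B)^2 := pow_le_pow_left₀ (by positivity) h1 2
        have s2 : π * W^2 ≤ (c * ((m:ℝ)+1)^2 / 2) * W^2 :=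
          mul_le_mul_of_nonneg_right hπk (sq_nonneg _)
        have s3 : (c/2) * (((m:ℝ)+1) * W)^2 ≤ (c/2) * (A+B)^2 :=
          mul_le_mul_of_nonneg_left s1 (by positivity)
        have s4 : (A+B)^2 ≤ 2*A^2 + 2*B^2 := by nlinarith [sq_nonneg (A - B)]
        have s5 : (c/2) * (A+B)^2 ≤ (c/2) * (2*A^2 + 2*B^2) :=
          mul_le_mul_of_nonneg_left s4 (by positivity)
        nlinarith [s2, s3, s5]
      linarith
    · rw [not_nonempty_iff] at hq
      exact summable_empty
  · exact .of_finite

theorem summable_gauss_translate {n : ℕ} (L : Submodule ℤ (EuclideanSpace ℝ (Fin n)))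
    [DiscreteTopology L] [IsZLattice ℝ L]
    (h₁ : Summable fun v : L => Real.exp (-π * ‖(v : EuclideanSpace ℝ (Fin n))‖ ^ 2))
    {c : ℝ} (hc : 0 < c) (u : EuclideanSpace ℝ (Fin n)) :
    Summable fun v : L => Real.exp (-c * ‖u - (v : EuclideanSpace ℝ (Fin n))‖ ^ 2) := by
  apply Summable.of_nonneg_of_le (fun _ => (Real.exp_pos _).le) _
    (((summable_gauss L h₁ (half_pos hc)).mul_left (Real.exp (c * ‖u‖^2))))
  intro v
  rw [← Real.exp_add]
  apply Real.exp_le_exp.mpr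
  have htri : ‖(v : EuclideanSpace ℝ (Fin n))‖ ≤ ‖u - v‖ + ‖u‖ := by
    calc ‖(v : EuclideanSpace ℝ (Fin n))‖ = ‖u - (u - v)‖ := by congr 1; abel
      _ ≤ ‖u‖ + ‖u - (v : EuclideanSpace ℝ (Fin n))‖ := norm_sub_le _ _
      _ = ‖u - (v : EuclideanSpace ℝ (Fin n))‖ + ‖u‖ := add_comm _ _
  have h0 : (0:ℝ) ≤ ‖u - (v : EuclideanSpace ℝ (Fin n))‖ := norm_nonneg _
  have h1 : (0:ℝ) ≤ ‖u‖ := norm_nonneg _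
  have h2 : (0:ℝ) ≤ ‖(v : EuclideanSpace ℝ (Fin n))‖ := norm_nonneg _
  nlinarith [sq_nonneg (‖u - (v : EuclideanSpace ℝ (Fin n))‖ - ‖u‖),
    pow_le_pow_left₀ h2 htri 2]

-- parallelogram identity for the Gaussian products
theorem gauss_parallelogram {n : ℕ} (x y v w : EuclideanSpace ℝ (Fin n)) :
    Real.exp (-π * ‖x - v‖ ^ 2) * Real.exp (-π * ‖y - w‖ ^ 2) =
      Real.exp (-(π/2) * ‖(x + y) - (v + w)‖ ^ 2) *
        Real.exp (-(π/2) * ‖(x - y) - (v - w)‖ ^ 2) := by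
  rw [← Real.exp_add, ← Real.exp_add]
  congr 1
  have h1 : (x + y) - (v + w) = (x - v) + (y - w) := by abel
  have h2 : (x - y) - (v - w) = (x - v) - (y - w) := by abel
  rw [h1, h2]
  generalize x - v = p
  generalize y - w = q
  rw [norm_add_sq_real, norm_sub_sq_real]
  ring

noncomputable def thetaL {n : ℕ} (L : Submodule ℤ (EuclideanSpace ℝ (Fin n)))
    (y : EuclideanSpace ℝ (Fin n)) : ℝ :=
  ∑' v : L, Real.exp (-π * ‖y - (v : EuclideanSpace ℝ (Fin n))‖ ^ 2)

set_option maxHeartbeats 1000000 in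
theorem gauss_key {n : ℕ} (L : Submodule ℤ (EuclideanSpace ℝ (Fin n)))
    [DiscreteTopology L] [IsZLattice ℝ L]
    (h₁ : Summable fun v : L => Real.exp (-π * ‖(v : EuclideanSpace ℝ (Fin n))‖ ^ 2))
    (x : EuclideanSpace ℝ (Fin n)) :
    2 * (thetaL L x * thetaL L x) ≤
      thetaL L (x + x) * thetaL L 0 + thetaL L 0 * thetaL L 0 := by
  classical
  set b := Module.Free.chooseBasis ℤ L with hb
  set ι := Module.Free.ChooseBasisIndex ℤ L with hι
  set pr : L → (ι → ZMod 2) := fun a i => ((b.repr a i : ZMod 2)) with hpr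
  -- the half-Gaussian
  set f : EuclideanSpace ℝ (Fin n) → L → ℝ :=
    fun u a => Real.exp (-(π/2) * ‖u - (a : EuclideanSpace ℝ (Fin n))‖ ^ 2) with hf
  have hf_sum : ∀ u, Summable (f u) := fun u =>
    summable_gauss_translate L h₁ (by positivity) u
  have hf_pos : ∀ u a, 0 < f u a := fun u a => Real.exp_pos _
  have hf_sub : ∀ u (q : ι → ZMod 2), Summable fun a : {a : L // pr a = q} => f u a :=
    fun u q => (hf_sum u).subtype _
  have hf_norm : ∀ u, Summable fun a : L => ‖f u a‖ := by
    intro u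
    simpa only [Real.norm_eq_abs] using (hf_sum u).abs
  have hf_sub_norm : ∀ u (q : ι → ZMod 2),
      Summable fun a : {a : L // pr a = q} => ‖f u a‖ :=
    fun u q => (hf_norm u).subtype _
  set A : EuclideanSpace ℝ (Fin n) → (ι → ZMod 2) → ℝ :=
    fun u q => ∑' a : {a : L // pr a = q}, f u a with hA
  -- parity invariance
  have hpr2 : ∀ v w : L, pr (v + w) = pr (v - w) := by
    intro v w
    funext i
    have h2 : ((2 : ℤ) : ZMod 2) = 0 := by decide
    show ((b.repr (v + w) i : ZMod 2)) = ((b.repr (v - w) i : ZMod 2))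
    rw [map_add, map_sub, Finsupp.add_apply, Finsupp.sub_apply]
    push_cast
    linear_combination ((b.repr w i : ℤ) : ZMod 2) * h2
  -- the folding bijection
  set F : L × L → (Σ q : ι → ZMod 2, {a : L // pr a = q} × {a : L // pr a = q}) :=
    fun p => ⟨pr (p.1 + p.2), (⟨p.1 + p.2, rfl⟩, ⟨p.1 - p.2, (hpr2 p.1 p.2).symm⟩)⟩ with hF
  have Finj : Function.Injective F := by
    intro p p' h
    have h' := congrArg (fun t : (Σ q : ι → ZMod 2,
        {a : L // pr a = q} × {a : L // pr a = q}) =>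
        (((t.2.1 : L) : EuclideanSpace ℝ (Fin n)), ((t.2.2 : L) : EuclideanSpace ℝ (Fin n)))) h
    simp only [F] at h'
    have hsum : ((p.1 : EuclideanSpace ℝ (Fin n)) + p.2) =
        ((p'.1 : EuclideanSpace ℝ (Fin n)) + p'.2) := by
      have := congrArg Prod.fst h'
      push_cast at this
      exact this
    have hdiff : ((p.1 : EuclideanSpace ℝ (Fin n)) - p.2) =
        ((p'.1 : EuclideanSpace ℝ (Fin n)) - p'.2) := by
      have := congrArg Prod.snd h'
      push_cast at this
      exact this
    have h2 : (2:ℝ) • (p.1 : EuclideanSpace ℝ (Fin n)) =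
        (2:ℝ) • (p'.1 : EuclideanSpace ℝ (Fin n)) := by
      have hh : ((p.1 : EuclideanSpace ℝ (Fin n)) + p.2) + ((p.1 : EuclideanSpace ℝ (Fin n)) - p.2)
          = ((p'.1 : EuclideanSpace ℝ (Fin n)) + p'.2) +
            ((p'.1 : EuclideanSpace ℝ (Fin n)) - p'.2) := by rw [hsum, hdiff]
      calc (2:ℝ) • (p.1 : EuclideanSpace ℝ (Fin n))
          = ((p.1 : EuclideanSpace ℝ (Fin n)) + p.2) +
            ((p.1 : EuclideanSpace ℝ (Fin n)) - p.2) := by module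
        _ = ((p'.1 : EuclideanSpace ℝ (Fin n)) + p'.2) +
            ((p'.1 : EuclideanSpace ℝ (Fin n)) - p'.2) := hh
        _ = (2:ℝ) • (p'.1 : EuclideanSpace ℝ (Fin n)) := by module
    have hp1 : (p.1 : EuclideanSpace ℝ (Fin n)) = p'.1 :=
      smul_right_injective _ (by norm_num : (2:ℝ) ≠ 0) h2
    have hp2 : (p.2 : EuclideanSpace ℝ (Fin n)) = p'.2 := by
      rw [hp1] at hsum
      exact add_left_cancel hsum
    exact Prod.ext (Subtype.ext hp1) (Subtype.ext hp2)
  have Fsurj : Function.Surjective F := by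
    rintro ⟨q, ⟨⟨a, ha⟩, ⟨c, hc⟩⟩⟩
    subst ha
    -- a and c have the same parity vector; find w with a = c + 2w
    have hdvd : ∀ i, (2:ℤ) ∣ (b.repr a i - b.repr c i) := by
      intro i
      have h0 : (((b.repr a i - b.repr c i : ℤ)) : ZMod 2) = 0 := by
        have hcoord : ((b.repr c i : ZMod 2)) = ((b.repr a i : ZMod 2)) := congrFun hc i
        push_cast
        rw [← hcoord]
        ring
      exact_mod_cast (ZMod.intCast_zmod_eq_zero_iff_dvd _ 2).mp h0
    obtain ⟨w, hwi⟩ : ∃ w : L, ∀ i, b.repr w i = (b.repr a i - b.repr c i) / 2 := by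
      refine ⟨b.equivFun.symm (fun i => (b.repr a i - b.repr c i) / 2), fun i => ?_⟩
      have h := congrFun
        (b.equivFun.apply_symm_apply (fun i => (b.repr a i - b.repr c i) / 2)) i
      simpa only [Module.Basis.equivFun_apply] using h
    have haw : c + w + w = a := by
      apply b.equivFun.injective
      ext i
      simp only [map_add, Pi.add_apply, Module.Basis.equivFun_apply, hwi i]
      have := Int.mul_ediv_cancel' (hdvd i)
      linarith [this]
    have hcw : c + w - w = c := by abel
    refine ⟨(c + w, w), ?_⟩
    show (⟨pr ((c+w) + w), (⟨(c+w) + w, rfl⟩, ⟨(c+w) - w, (hpr2 (c+w) w).symm⟩)⟩ :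
      (Σ q : ι → ZMod 2, {a : L // pr a = q} × {a : L // pr a = q})) = ⟨pr a, (⟨a, rfl⟩, ⟨c, hc⟩)⟩
    subst haw
    exact congrArg (Sigma.mk _) (Prod.ext rfl (Subtype.ext hcw))
  set E3 := Equiv.ofBijective F ⟨Finj, Fsurj⟩ with hE3
  -- the master identity
  have master : ∀ x y : EuclideanSpace ℝ (Fin n),
      thetaL L x * thetaL L y = ∑ q : ι → ZMod 2, A (x + y) q * A (x - y) q := by
    intro x y
    set g : EuclideanSpace ℝ (Fin n) → L → ℝ :=
      fun u a => Real.exp (-π * ‖u - (a : EuclideanSpace ℝ (Fin n))‖ ^ 2) with hg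
    have hgs : ∀ y, Summable (g y) := fun y =>
      summable_gauss_translate L h₁ Real.pi_pos y
    have hg_norm : ∀ y, Summable fun a : L => ‖g y a‖ := by
      intro y
      simpa only [Real.norm_eq_abs] using (hgs y).abs
    have hmul : Summable fun p : L × L => g x p.1 * g y p.2 :=
      summable_mul_of_summable_norm (hg_norm x) (hg_norm y)
    have hpareq : ∀ p : L × L, g x p.1 * g y p.2 =
        f (x + y) (p.1 + p.2) * f (x - y) (p.1 - p.2) := by
      intro p
      simp only [hg, hf]
      rw [Submodule.coe_add, Submodule.coe_sub]
      exact gauss_parallelogram x y p.1 p.2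
    have step1 : thetaL L x * thetaL L y = ∑' p : L × L, g x p.1 * g y p.2 :=
      Summable.tsum_mul_tsum (hgs x) (hgs y) hmul
    have hmul' : Summable fun p : L × L =>
        f (x + y) (p.1 + p.2) * f (x - y) (p.1 - p.2) :=
      hmul.congr hpareq
    have step2 : ∑' p : L × L, g x p.1 * g y p.2 =
        ∑' p : L × L, f (x + y) (p.1 + p.2) * f (x - y) (p.1 - p.2) :=
      tsum_congr hpareq
    have hHsum : Summable fun t : (Σ q : ι → ZMod 2,
        {a : L // pr a = q} × {a : L // pr a = q}) =>
        f (x + y) (t.2.1 : L) * f (x - y) (t.2.2 : L) := by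
      apply E3.summable_iff.mp
      exact hmul'.congr (fun p => rfl)
    have step3 : ∑' p : L × L, f (x + y) (p.1 + p.2) * f (x - y) (p.1 - p.2) =
        ∑' t : (Σ q : ι → ZMod 2, {a : L // pr a = q} × {a : L // pr a = q}),
          f (x + y) (t.2.1 : L) * f (x - y) (t.2.2 : L) := by
      rw [← Equiv.tsum_eq E3 (fun t => f (x + y) (t.2.1 : L) * f (x - y) (t.2.2 : L))]
      rfl
    have step4 : ∑' t : (Σ q : ι → ZMod 2, {a : L // pr a = q} × {a : L // pr a = q}),
          f (x + y) (t.2.1 : L) * f (x - y) (t.2.2 : L) =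
        ∑ q : ι → ZMod 2, ∑' r : {a : L // pr a = q} × {a : L // pr a = q},
          f (x + y) (r.1 : L) * f (x - y) (r.2 : L) := by
      rw [Summable.tsum_sigma hHsum, tsum_fintype]
    have step5 : ∀ q : ι → ZMod 2,
        (∑' r : {a : L // pr a = q} × {a : L // pr a = q},
          f (x + y) (r.1 : L) * f (x - y) (r.2 : L)) = A (x + y) q * A (x - y) q := by
      intro q
      exact (Summable.tsum_mul_tsum (hf_sub (x+y) q) (hf_sub (x-y) q)
        (summable_mul_of_summable_norm (hf_sub_norm (x+y) q) (hf_sub_norm (x-y) q))).symm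
    rw [step1, step2, step3, step4]
    exact Finset.sum_congr rfl (fun q _ => step5 q)
  -- conclude
  have e1 : thetaL L x * thetaL L x = ∑ q : ι → ZMod 2, A (x + x) q * A 0 q := by
    rw [master x x]
    simp [sub_self]
  have e2 : thetaL L (x + x) * thetaL L 0 = ∑ q : ι → ZMod 2, A (x + x) q * A (x + x) q := by
    rw [master (x + x) 0]
    simp
  have e3 : thetaL L 0 * thetaL L 0 = ∑ q : ι → ZMod 2, A 0 q * A 0 q := by
    rw [master 0 0]
    simp
  rw [e1, e2, e3, ← Finset.sum_add_distrib, Finset.mul_sum]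
  apply Finset.sum_le_sum
  intro q _
  nlinarith [sq_nonneg (A (x + x) q - A 0 q)]

theorem theta_shift {n : ℕ} (L : Submodule ℤ (EuclideanSpace ℝ (Fin n)))
    (z : EuclideanSpace ℝ (Fin n)) (w : L) :
    thetaL L (z + (w : EuclideanSpace ℝ (Fin n))) = thetaL L z := by
  unfold thetaL
  rw [← Equiv.tsum_eq (Equiv.addRight w)
    (fun v : L => Real.exp (-π * ‖z + (w : EuclideanSpace ℝ (Fin n)) -
      (v : EuclideanSpace ℝ (Fin n))‖ ^ 2))]
  apply tsum_congr
  intro v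
  congr 2
  push_cast [Equiv.coe_addRight]
  congr 1
  abel

theorem theta_bound {n : ℕ} (L : Submodule ℤ (EuclideanSpace ℝ (Fin n)))
    [DiscreteTopology L] [IsZLattice ℝ L]
    (h₁ : Summable fun v : L => Real.exp (-π * ‖(v : EuclideanSpace ℝ (Fin n))‖ ^ 2)) :
    ∃ M : ℝ, ∀ y : EuclideanSpace ℝ (Fin n), thetaL L y ≤ M := by
  classical
  set b := Module.Free.chooseBasis ℤ L with hb
  set B := b.ofZLatticeBasis ℝ L with hB
  obtain ⟨R, hR⟩ := (ZSpan.fundamentalDomain_isBounded B).exists_norm_le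
  set S := ∑' v : L, Real.exp (-(π/2) * ‖(v : EuclideanSpace ℝ (Fin n))‖ ^ 2) with hS
  have hS0 : 0 ≤ S := tsum_nonneg (fun _ => (Real.exp_pos _).le)
  refine ⟨Real.exp (π * R ^ 2) * S, fun y => ?_⟩
  -- reduce to the fundamental domain
  have hincl : ∀ t : EuclideanSpace ℝ (Fin n),
      t ∈ Submodule.span ℤ (Set.range ⇑B) → t ∈ L := by
    intro t ht
    rwa [b.ofZLatticeBasis_span ℝ] at ht
  have hfloor : ((ZSpan.floor B y : EuclideanSpace ℝ (Fin n))) ∈ L :=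
    hincl _ (ZSpan.floor B y).2
  have hy : thetaL L y = thetaL L (ZSpan.fract B y) := by
    have : y = ZSpan.fract B y + ((⟨_, hfloor⟩ : L) : EuclideanSpace ℝ (Fin n)) := by
      simp [ZSpan.fract_apply]
    conv_lhs => rw [this]
    rw [theta_shift]
  rw [hy]
  have hzR : ‖ZSpan.fract B y‖ ≤ R := hR _ (ZSpan.fract_mem_fundamentalDomain B y)
  obtain ⟨z, hzR⟩ : ∃ z : EuclideanSpace ℝ (Fin n), ‖z‖ ≤ R ∧ z = ZSpan.fract B y :=
    ⟨ZSpan.fract B y, hzR, rfl⟩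
  rw [← hzR.2]
  have hzR := hzR.1
  -- bound each term
  have hterm : ∀ v : L, Real.exp (-π * ‖z - (v : EuclideanSpace ℝ (Fin n))‖ ^ 2) ≤
      Real.exp (π * R ^ 2) * Real.exp (-(π/2) * ‖(v : EuclideanSpace ℝ (Fin n))‖ ^ 2) := by
    intro v
    rw [← Real.exp_add]
    apply Real.exp_le_exp.mpr
    have htri : ‖(v : EuclideanSpace ℝ (Fin n))‖ ≤ ‖z - v‖ + ‖z‖ := by
      calc ‖(v : EuclideanSpace ℝ (Fin n))‖ = ‖z - (z - v)‖ := by congr 1; abel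
        _ ≤ ‖z‖ + ‖z - (v : EuclideanSpace ℝ (Fin n))‖ := norm_sub_le _ _
        _ = ‖z - (v : EuclideanSpace ℝ (Fin n))‖ + ‖z‖ := add_comm _ _
    have h0 : (0:ℝ) ≤ ‖z - (v : EuclideanSpace ℝ (Fin n))‖ := norm_nonneg _
    have h1 : (0:ℝ) ≤ ‖z‖ := norm_nonneg _
    have h2 : (0:ℝ) ≤ ‖(v : EuclideanSpace ℝ (Fin n))‖ := norm_nonneg _
    have h3 : (0:ℝ) ≤ R := le_trans h1 hzR
    have h4 : ‖z‖^2 ≤ R^2 := pow_le_pow_left₀ h1 hzR 2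
    nlinarith [sq_nonneg (‖z - (v : EuclideanSpace ℝ (Fin n))‖ - ‖z‖),
      pow_le_pow_left₀ h2 htri 2, Real.pi_pos]
  unfold thetaL
  calc (∑' v : L, Real.exp (-π * ‖z - (v : EuclideanSpace ℝ (Fin n))‖ ^ 2)) ≤
        ∑' v : L, Real.exp (π * R ^ 2) *
          Real.exp (-(π/2) * ‖(v : EuclideanSpace ℝ (Fin n))‖ ^ 2) :=
      Summable.tsum_le_tsum hterm (summable_gauss_translate L h₁ Real.pi_pos z)
        ((summable_gauss L h₁ (by positivity)).mul_left _)
    _ = Real.exp (π * R ^ 2) * S := tsum_mul_left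


set_option maxHeartbeats 2000000 in
theorem main_result {n : ℕ}
    (L : Submodule ℤ (EuclideanSpace ℝ (Fin n)))
    [DiscreteTopology L] [IsZLattice ℝ L]
    (x : EuclideanSpace ℝ (Fin n))
    (h₁ : Summable fun v : L => Real.exp (-π * ‖(v : EuclideanSpace ℝ (Fin n))‖ ^ 2)) :
    (∑' v : L, Real.exp (-π * ‖x - (v : EuclideanSpace ℝ (Fin n))‖ ^ 2)) ≤
      ∑' v : L, Real.exp (-π * ‖(v : EuclideanSpace ℝ (Fin n))‖ ^ 2) := by
  have hRHS : (∑' v : L, Real.exp (-π * ‖(v : EuclideanSpace ℝ (Fin n))‖ ^ 2)) =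
      thetaL L 0 := by
    unfold thetaL
    apply tsum_congr
    intro v
    rw [zero_sub, norm_neg]
  have hLHS : (∑' v : L, Real.exp (-π * ‖x - (v : EuclideanSpace ℝ (Fin n))‖ ^ 2)) =
      thetaL L x := rfl
  rw [hRHS, hLHS]
  obtain ⟨M, hM⟩ := theta_bound L h₁
  have hbdd : BddAbove (Set.range (thetaL L)) := by
    refine ⟨M, ?_⟩
    rintro _ ⟨y, rfl⟩
    exact hM y
  set s := ⨆ y : EuclideanSpace ℝ (Fin n), thetaL L y with hs
  have hles : ∀ y, thetaL L y ≤ s := fun y => le_ciSup hbdd y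
  have hθ0 : 0 < thetaL L 0 := by
    unfold thetaL
    exact Summable.tsum_pos (summable_gauss_translate L h₁ Real.pi_pos 0)
      (fun v => (Real.exp_pos _).le) (0 : L) (Real.exp_pos _)
  have hθnn : ∀ y, 0 ≤ thetaL L y := fun y => tsum_nonneg (fun _ => (Real.exp_pos _).le)
  have hs0 : 0 ≤ s := le_trans (hθnn 0) (hles 0)
  set c := (s * thetaL L 0 + thetaL L 0 * thetaL L 0) / 2 with hc
  have hc0 : 0 ≤ c := by positivity
  have hsc : s ≤ Real.sqrt c := by
    apply ciSup_le
    intro y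
    have hk := gauss_key L h₁ y
    have h2 : thetaL L y * thetaL L y ≤ c := by
      have := hles (y + y)
      nlinarith [hθ0, hθnn (y + y)]
    calc thetaL L y = Real.sqrt (thetaL L y * thetaL L y) :=
          (Real.sqrt_mul_self (hθnn y)).symm
      _ ≤ Real.sqrt c := Real.sqrt_le_sqrt h2
  have hs2 : s * s ≤ c := by
    have := mul_le_mul hsc hsc hs0 (Real.sqrt_nonneg c)
    rwa [Real.mul_self_sqrt hc0] at this
  have hsθ : s ≤ thetaL L 0 := by nlinarith [hθ0, hs0, hs2]
  exact le_trans (hles x) hsθ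


/-- For any full-rank lattice `L` in `ℝⁿ` with Gaussian mass
`Θ = Σ_{v ∈ L} e^{-π‖v‖²}` and any `x ∈ ℝⁿ`, the Gaussian sum over the translated lattice
satisfies `Σ_{v ∈ L} e^{-π‖x−v‖²} ≤ Θ`. -/
theorem gaussian_sum_translate_le {n : ℕ}
    (L : Submodule ℤ (EuclideanSpace ℝ (Fin n)))
    [DiscreteTopology L] [IsZLattice ℝ L]
    (x : EuclideanSpace ℝ (Fin n))
    (h₁ : Summable fun v : L => Real.exp (-π * ‖(v : EuclideanSpace ℝ (Fin n))‖ ^ 2))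
    (h₂ : Summable fun v : L => Real.exp (-π * ‖x - (v : EuclideanSpace ℝ (Fin n))‖ ^ 2)) :
    (∑' v : L, Real.exp (-π * ‖x - (v : EuclideanSpace ℝ (Fin n))‖ ^ 2)) ≤
      ∑' v : L, Real.exp (-π * ‖(v : EuclideanSpace ℝ (Fin n))‖ ^ 2) :=
  main_result L x h₁
end

section
/- For any full-rank lattice L in R^n and any x ∈ R^n, Σ_{v∈L} e^{-π‖x−v‖²} ≥ 2·covol(L)^{-1} − Σ_{v∈L} e^{-π‖v‖²}. -/
open scoped Real ENNReal
open MeasureTheory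

set_option linter.unusedSectionVars false
namespace GaussAux

variable {n : ℕ}

local notation "E" => EuclideanSpace ℝ (Fin n)

/-- Half-width Gaussian valued in `ℝ≥0∞`. -/
noncomputable def G (y : EuclideanSpace ℝ (Fin n)) : ℝ≥0∞ :=
  ENNReal.ofReal (Real.exp (-(2 * π) * ‖y‖ ^ 2))

lemma measurable_G : Measurable (G (n := n)) := by
  apply ENNReal.measurable_ofReal.comp
  fun_prop

lemma integrable_rexp_norm_sq {b : ℝ} (hb : 0 < b) :
    Integrable (fun y : E => Real.exp (-b * ‖y‖ ^ 2)) := by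
  have h := (GaussianFourier.integrable_cexp_neg_mul_sq_norm_add
      (b := (b : ℂ)) (by simpa using hb) 0 (0 : E)).norm
  refine h.congr (Filter.Eventually.of_forall fun y => ?_)
  simp [Complex.norm_exp, ← Complex.ofReal_pow, ← Complex.ofReal_mul, ← Complex.ofReal_neg]

lemma lintegral_rexp_norm_sq {b : ℝ} (hb : 0 < b) :
    ∫⁻ y : E, ENNReal.ofReal (Real.exp (-b * ‖y‖ ^ 2)) =
      ENNReal.ofReal ((π / b) ^ ((n : ℝ) / 2)) := by
  rw [← MeasureTheory.ofReal_integral_eq_lintegral_ofReal (integrable_rexp_norm_sq hb)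
    (Filter.Eventually.of_forall fun y => (Real.exp_pos _).le)]
  rw [GaussianFourier.integral_rexp_neg_mul_sq_norm hb]
  rw [finrank_euclideanSpace_fin]

/-- The key pointwise Gaussian product identity. -/
lemma G_mul_G (y d : EuclideanSpace ℝ (Fin n)) :
    G y * G (y + d) = ENNReal.ofReal (Real.exp (-π * ‖d‖ ^ 2)) *
      ENNReal.ofReal (Real.exp (-(4 * π) * ‖y + (2:ℝ)⁻¹ • d‖ ^ 2)) := by
  rw [G, G, ← ENNReal.ofReal_mul (Real.exp_pos _).le,
    ← ENNReal.ofReal_mul (Real.exp_pos _).le, ← Real.exp_add, ← Real.exp_add]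
  congr 1
  have h1 : ‖y + d‖ ^ 2 = ‖y‖ ^ 2 + 2 * inner ℝ y d + ‖d‖ ^ 2 :=
    norm_add_sq_real y d
  have h2 : ‖y + (2:ℝ)⁻¹ • d‖ ^ 2 = ‖y‖ ^ 2 + 2 * inner ℝ y ((2:ℝ)⁻¹ • d) + ‖(2:ℝ)⁻¹ • d‖ ^ 2 :=
    norm_add_sq_real y ((2:ℝ)⁻¹ • d)
  have h3 : inner ℝ y ((2:ℝ)⁻¹ • d) = (2:ℝ)⁻¹ * inner ℝ y d := real_inner_smul_right y d _
  have h4 : ‖(2:ℝ)⁻¹ • d‖ ^ 2 = (2:ℝ)⁻¹ ^ 2 * ‖d‖ ^ 2 := by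
    rw [norm_smul]; simp [mul_pow]
  rw [h1, h2, h3, h4]; ring

set_option maxHeartbeats 800000 in
/-- Integral of the Gaussian product. -/
lemma lintegral_G_mul_G (d : EuclideanSpace ℝ (Fin n)) :
    ∫⁻ y : E, G y * G (y + d) =
      ENNReal.ofReal (Real.exp (-π * ‖d‖ ^ 2)) * ENNReal.ofReal ((4:ℝ)⁻¹ ^ ((n : ℝ) / 2)) := by
  simp_rw [G_mul_G]
  rw [lintegral_const_mul' _ _ ENNReal.ofReal_ne_top]
  congr 1
  have ht : ∫⁻ y : E, ENNReal.ofReal (Real.exp (-(4 * π) * ‖y + (2:ℝ)⁻¹ • d‖ ^ 2)) =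
      ∫⁻ y : E, ENNReal.ofReal (Real.exp (-(4 * π) * ‖y‖ ^ 2)) := by
    exact MeasureTheory.lintegral_add_right_eq_self
      (fun y : E => ENNReal.ofReal (Real.exp (-(4 * π) * ‖y‖ ^ 2))) ((2:ℝ)⁻¹ • d)
  rw [ht, lintegral_rexp_norm_sq (by positivity)]
  congr 2
  rw [div_eq_mul_inv]
  field_simp


section Lattice

variable (L : Submodule ℤ (EuclideanSpace ℝ (Fin n)))
  [DiscreteTopology L] [IsZLattice ℝ L]

/-- Periodization of the translated half-width Gaussian. -/
noncomputable def A (c y : EuclideanSpace ℝ (Fin n)) : ℝ≥0∞ :=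
  ∑' v : L, G (c + y - (v : EuclideanSpace ℝ (Fin n)))

lemma measurable_A (c : EuclideanSpace ℝ (Fin n)) : Measurable (A L c) :=
  Measurable.ennreal_tsum fun v => measurable_G.comp (by fun_prop)

lemma A_per (c : EuclideanSpace ℝ (Fin n)) (v : L) (y : EuclideanSpace ℝ (Fin n)) :
    A L c ((v : EuclideanSpace ℝ (Fin n)) + y) = A L c y := by
  rw [A, A, ← (Equiv.addRight v).tsum_eq
    (fun w : L => G (c + ((v : EuclideanSpace ℝ (Fin n)) + y) - (w : EuclideanSpace ℝ (Fin n))))]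
  congr 1
  funext w
  simp only [Equiv.coe_addRight, Submodule.coe_add]
  congr 1
  abel

set_option maxHeartbeats 1600000 in
lemma lintegral_F_A_mul {F : Set (EuclideanSpace ℝ (Fin n))}
    (hF : IsAddFundamentalDomain L F volume) (c : EuclideanSpace ℝ (Fin n))
    (H : EuclideanSpace ℝ (Fin n) → ℝ≥0∞) (hH : Measurable H)
    (hper : ∀ (v : L) (y : EuclideanSpace ℝ (Fin n)),
      H ((v : EuclideanSpace ℝ (Fin n)) + y) = H y) :
    ∫⁻ y in F, A L c y * H y = ∫⁻ z, G (c + z) * H z := by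
  have : MeasurableVAdd L (EuclideanSpace ℝ (Fin n)) :=
    (inferInstance : MeasurableVAdd L.toAddSubgroup (EuclideanSpace ℝ (Fin n)))
  have : VAddInvariantMeasure L (EuclideanSpace ℝ (Fin n)) volume :=
    (inferInstance : VAddInvariantMeasure L.toAddSubgroup (EuclideanSpace ℝ (Fin n)) volume)
  have hmeas : ∀ v : L, Measurable fun y : EuclideanSpace ℝ (Fin n) =>
      G (c + y - (v : EuclideanSpace ℝ (Fin n))) * H y :=
    fun v => (measurable_G.comp (by fun_prop)).mul hH
  calc ∫⁻ y in F, A L c y * H y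
      = ∫⁻ y in F, ∑' v : L, G (c + y - (v : EuclideanSpace ℝ (Fin n))) * H y := by
        simp_rw [A, ENNReal.tsum_mul_right]
    _ = ∑' v : L, ∫⁻ y in F, G (c + y - (v : EuclideanSpace ℝ (Fin n))) * H y :=
        lintegral_tsum fun v => (hmeas v).aemeasurable
    _ = ∑' v : L, ∫⁻ y in F, (fun z => G (c + z) * H z) ((-v : L) +ᵥ y) := by
        congr 1
        funext v
        congr 1
        funext y
        show G (c + y - (v : EuclideanSpace ℝ (Fin n))) * H y
            = G (c + (-(v : EuclideanSpace ℝ (Fin n)) + y)) * H (-(v : EuclideanSpace ℝ (Fin n)) + y)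
        rw [show -(v : EuclideanSpace ℝ (Fin n)) + y = ((-v : L) : EuclideanSpace ℝ (Fin n)) + y by
            push_cast; abel, hper (-v) y]
        congr 2
        push_cast
        abel
    _ = ∑' v : L, ∫⁻ y in F, (fun z => G (c + z) * H z) (v +ᵥ y) :=
        (Equiv.neg L).tsum_eq (fun v : L => ∫⁻ y in F, (fun z => G (c + z) * H z) (v +ᵥ y))
    _ = ∫⁻ z, G (c + z) * H z := (hF.lintegral_eq_tsum'' fun z => G (c + z) * H z).symm

lemma lintegral_G_mul_A (e : EuclideanSpace ℝ (Fin n)) :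
    ∫⁻ z, G z * A L e z = ENNReal.ofReal ((4:ℝ)⁻¹ ^ ((n : ℝ) / 2)) *
      ∑' w : L, ENNReal.ofReal (Real.exp (-π * ‖e - (w : EuclideanSpace ℝ (Fin n))‖ ^ 2)) := by
  have hpt : ∀ z : EuclideanSpace ℝ (Fin n), G z * A L e z
      = ∑' w : L, G z * G (z + (e - (w : EuclideanSpace ℝ (Fin n)))) := by
    intro z
    rw [A, ← ENNReal.tsum_mul_left]
    congr 1
    funext w
    congr 2
    abel
  calc ∫⁻ z, G z * A L e z
      = ∫⁻ z, ∑' w : L, G z * G (z + (e - (w : EuclideanSpace ℝ (Fin n)))) := by simp_rw [hpt]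
    _ = ∑' w : L, ∫⁻ z, G z * G (z + (e - (w : EuclideanSpace ℝ (Fin n)))) :=
        lintegral_tsum fun w =>
          (measurable_G.mul (measurable_G.comp (by fun_prop))).aemeasurable
    _ = ∑' w : L, ENNReal.ofReal (Real.exp (-π * ‖e - (w : EuclideanSpace ℝ (Fin n))‖ ^ 2)) *
          ENNReal.ofReal ((4:ℝ)⁻¹ ^ ((n : ℝ) / 2)) := by simp_rw [lintegral_G_mul_G]
    _ = _ := by rw [ENNReal.tsum_mul_right, mul_comm]

end Lattice

end GaussAux
open MeasureTheory GaussAux ENNReal in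
set_option maxHeartbeats 1600000 in
/-- For any full-rank lattice `L` in `ℝⁿ` and any `x ∈ ℝⁿ`,
`Σ_{v∈L} e^{-π‖x−v‖²} ≥ 2·covol(L)⁻¹ − Σ_{v∈L} e^{-π‖v‖²}`. -/
theorem gaussian_sum_translate_ge {n : ℕ}
    (L : Submodule ℤ (EuclideanSpace ℝ (Fin n)))
    [DiscreteTopology L] [IsZLattice ℝ L]
    (x : EuclideanSpace ℝ (Fin n))
    (h₁ : Summable fun v : L => Real.exp (-π * ‖(v : EuclideanSpace ℝ (Fin n))‖ ^ 2))
    (h₂ : Summable fun v : L => Real.exp (-π * ‖x - (v : EuclideanSpace ℝ (Fin n))‖ ^ 2)) :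
    2 * (ZLattice.covolume L)⁻¹ -
        ∑' v : L, Real.exp (-π * ‖(v : EuclideanSpace ℝ (Fin n))‖ ^ 2) ≤
      ∑' v : L, Real.exp (-π * ‖x - (v : EuclideanSpace ℝ (Fin n))‖ ^ 2) := by
  classical
  set s0 : ℝ := ∑' v : L, Real.exp (-π * ‖(v : EuclideanSpace ℝ (Fin n))‖ ^ 2) with hs0def
  set sx : ℝ := ∑' v : L, Real.exp (-π * ‖x - (v : EuclideanSpace ℝ (Fin n))‖ ^ 2) with hsxdef
  have hs0 : 0 ≤ s0 := tsum_nonneg fun _ => (Real.exp_pos _).le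
  have hsx : 0 ≤ sx := tsum_nonneg fun _ => (Real.exp_pos _).le
  set c2 : ℝ := (2:ℝ)⁻¹ ^ ((n : ℝ) / 2) with hc2def
  set c4 : ℝ := (4:ℝ)⁻¹ ^ ((n : ℝ) / 2) with hc4def
  have hc2 : 0 < c2 := Real.rpow_pos_of_pos (by norm_num) _
  have hc4 : 0 < c4 := Real.rpow_pos_of_pos (by norm_num) _
  have hc24 : c4 = c2 ^ 2 := by
    rw [hc2def, hc4def, ← Real.rpow_natCast ((2:ℝ)⁻¹ ^ ((n:ℝ)/2)) 2,
      ← Real.rpow_mul (by norm_num : (0:ℝ) ≤ 2⁻¹),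
      show (4:ℝ)⁻¹ = (2:ℝ)⁻¹ ^ ((2:ℕ):ℝ) by rw [Real.rpow_natCast]; norm_num,
      ← Real.rpow_mul (by norm_num : (0:ℝ) ≤ 2⁻¹)]
    norm_num [mul_comm]
  set covol : ℝ := ZLattice.covolume L volume with hcovoldef
  have hcovol : 0 < covol := ZLattice.covolume_pos L volume
  -- fundamental domain
  set b := Module.Free.chooseBasis ℤ L with hbdef
  set F : Set (EuclideanSpace ℝ (Fin n)) := ZSpan.fundamentalDomain (b.ofZLatticeBasis ℝ)
    with hFdef
  have hF : IsAddFundamentalDomain L F volume := ZLattice.isAddFundamentalDomain b volume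
  have hFvol : volume F = ENNReal.ofReal covol := by
    rw [hcovoldef, ZLattice.covolume_eq_measure_fundamentalDomain L volume hF,
      measureReal_def, ENNReal.ofReal_toReal]
    exact ((ZSpan.fundamentalDomain_isBounded (b.ofZLatticeBasis ℝ)).measure_lt_top).ne
  -- conversions of the lattice sums
  have hS0 : (∑' w : L, ENNReal.ofReal
      (Real.exp (-π * ‖(0 : EuclideanSpace ℝ (Fin n)) - (w : EuclideanSpace ℝ (Fin n))‖ ^ 2)))
      = ENNReal.ofReal s0 := by
    simp_rw [zero_sub, norm_neg]
    exact (ENNReal.ofReal_tsum_of_nonneg (fun _ => (Real.exp_pos _).le) h₁).symm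
  have hSx : (∑' w : L, ENNReal.ofReal
      (Real.exp (-π * ‖x - (w : EuclideanSpace ℝ (Fin n))‖ ^ 2)))
      = ENNReal.ofReal sx :=
    (ENNReal.ofReal_tsum_of_nonneg (fun _ => (Real.exp_pos _).le) h₂).symm
  -- the four fundamental-domain integrals
  have hG2 : ∫⁻ z : EuclideanSpace ℝ (Fin n), G z = ENNReal.ofReal c2 := by
    rw [show (G (n := n)) = fun z => ENNReal.ofReal (Real.exp (-(2*π) * ‖z‖^2)) from rfl,
      lintegral_rexp_norm_sq (by positivity), hc2def]
    congr 2
    rw [div_eq_iff (by positivity : (2*π : ℝ) ≠ 0)]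
    ring
  have hIA : ∫⁻ y in F, A L 0 y = ENNReal.ofReal c2 := by
    have := lintegral_F_A_mul L hF 0 (fun _ => 1) measurable_const (fun _ _ => rfl)
    simp only [mul_one, zero_add] at this
    rw [this, hG2]
  have hIB : ∫⁻ y in F, A L x y = ENNReal.ofReal c2 := by
    have := lintegral_F_A_mul L hF x (fun _ => 1) measurable_const (fun _ _ => rfl)
    simp only [mul_one] at this
    rw [this, MeasureTheory.lintegral_add_left_eq_self (G (n := n)) x, hG2]
  have hIAA : ∫⁻ y in F, A L 0 y * A L 0 y = ENNReal.ofReal c4 * ENNReal.ofReal s0 := by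
    rw [lintegral_F_A_mul L hF 0 (A L 0) (measurable_A L 0) (A_per L 0)]
    simp only [zero_add]
    rw [lintegral_G_mul_A L 0, hS0, hc4def]
  have hIAB : ∫⁻ y in F, A L 0 y * A L x y = ENNReal.ofReal c4 * ENNReal.ofReal sx := by
    rw [lintegral_F_A_mul L hF 0 (A L x) (measurable_A L x) (A_per L x)]
    simp only [zero_add]
    rw [lintegral_G_mul_A L x, hSx, hc4def]
  have hBA0 : ∀ z : EuclideanSpace ℝ (Fin n), A L 0 (x + z) = A L x z := by
    intro z
    rw [A, A]
    congr 1
    funext w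
    congr 1
    abel
  have hIBB : ∫⁻ y in F, A L x y * A L x y = ENNReal.ofReal c4 * ENNReal.ofReal s0 := by
    rw [lintegral_F_A_mul L hF x (A L x) (measurable_A L x) (A_per L x)]
    have := MeasureTheory.lintegral_add_left_eq_self (μ := volume)
      (fun u : EuclideanSpace ℝ (Fin n) => G u * A L 0 u) x
    calc ∫⁻ z, G (x + z) * A L x z
        = ∫⁻ z, G (x + z) * A L 0 (x + z) := by simp_rw [hBA0]
      _ = ∫⁻ u, G u * A L 0 u := this
      _ = ENNReal.ofReal c4 * ENNReal.ofReal s0 := by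
          rw [lintegral_G_mul_A L 0, hS0, hc4def]
  -- Cauchy–Schwarz on the fundamental domain
  set Φ : EuclideanSpace ℝ (Fin n) → ℝ≥0∞ := fun y => A L 0 y + A L x y with hΦdef
  have hΦmeas : Measurable Φ := (measurable_A L 0).add (measurable_A L x)
  have hΦ1 : ∫⁻ y in F, Φ y = ENNReal.ofReal c2 + ENNReal.ofReal c2 := by
    rw [hΦdef]
    rw [lintegral_add_left (measurable_A L 0), hIA, hIB]
  have hΦ2 : ∫⁻ y in F, Φ y * Φ y
      = ENNReal.ofReal c4 * (ENNReal.ofReal s0 + ENNReal.ofReal sx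
          + (ENNReal.ofReal sx + ENNReal.ofReal s0)) := by
    have expand : ∀ y, Φ y * Φ y
        = (A L 0 y * A L 0 y + A L 0 y * A L x y)
          + (A L x y * A L 0 y + A L x y * A L x y) := by
      intro y; rw [hΦdef]; ring
    simp_rw [expand]
    rw [lintegral_add_left (f := fun y => A L 0 y * A L 0 y + A L 0 y * A L x y) (((measurable_A L 0).mul (measurable_A L 0)).add
      ((measurable_A L 0).mul (measurable_A L x))),
      lintegral_add_left (f := fun y => A L 0 y * A L 0 y) ((measurable_A L 0).mul (measurable_A L 0)),
      lintegral_add_left (f := fun y => A L x y * A L 0 y) ((measurable_A L x).mul (measurable_A L 0))]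
    have hIBA : ∫⁻ y in F, A L x y * A L 0 y = ENNReal.ofReal c4 * ENNReal.ofReal sx := by
      simp_rw [mul_comm (A L x _) (A L 0 _)]
      exact hIAB
    rw [hIAA, hIAB, hIBA, hIBB]
    ring
  have hconj : Real.HolderConjugate 2 2 := Real.HolderConjugate.two_two
  have hCS0 : ∫⁻ y in F, Φ y ≤ (∫⁻ y in F, Φ y * Φ y) ^ ((1:ℝ)/2) * (volume F) ^ ((1:ℝ)/2) := by
    have := ENNReal.lintegral_mul_le_Lp_mul_Lq (volume.restrict F) hconj
      hΦmeas.aemeasurable (aemeasurable_const (b := (1 : ℝ≥0∞)))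
    simp only [Pi.mul_apply, mul_one, ENNReal.one_rpow, lintegral_const,
      Measure.restrict_apply_univ, one_mul] at this
    have hsq : (∫⁻ y in F, Φ y ^ (2:ℝ)) = ∫⁻ y in F, Φ y * Φ y := by
      apply lintegral_congr
      intro y
      rw [show (2:ℝ) = ((2:ℕ):ℝ) by norm_num, ENNReal.rpow_natCast, sq]
    rw [← hsq]
    exact this
  have hCS : (∫⁻ y in F, Φ y) ^ 2 ≤ (∫⁻ y in F, Φ y * Φ y) * volume F := by
    calc (∫⁻ y in F, Φ y) ^ 2
        ≤ ((∫⁻ y in F, Φ y * Φ y) ^ ((1:ℝ)/2) * (volume F) ^ ((1:ℝ)/2)) ^ 2 :=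
          pow_le_pow_left₀ zero_le hCS0 2
      _ = (∫⁻ y in F, Φ y * Φ y) * volume F := by
          rw [mul_pow, ← ENNReal.rpow_natCast ((∫⁻ y in F, Φ y * Φ y) ^ ((1:ℝ)/2)) 2,
            ← ENNReal.rpow_natCast ((volume F) ^ ((1:ℝ)/2)) 2,
            ← ENNReal.rpow_mul, ← ENNReal.rpow_mul]
          norm_num
  rw [hΦ1, hΦ2, hFvol] at hCS
  -- convert to a real inequality
  have hreal : (c2 + c2) ^ 2 ≤ c4 * (s0 + sx + (sx + s0)) * covol := by
    have hR : ENNReal.ofReal ((c2 + c2) ^ 2)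
        ≤ ENNReal.ofReal (c4 * (s0 + sx + (sx + s0)) * covol) := by
      rw [ENNReal.ofReal_pow (by linarith), ENNReal.ofReal_add hc2.le hc2.le,
        ENNReal.ofReal_mul (mul_nonneg hc4.le (by linarith)), ENNReal.ofReal_mul hc4.le,
        ENNReal.ofReal_add (by linarith) (by linarith),
        ENNReal.ofReal_add hs0 hsx, ENNReal.ofReal_add hsx hs0]
      exact hCS
    exact (ENNReal.ofReal_le_ofReal_iff
      (mul_nonneg (mul_nonneg hc4.le (by linarith)) hcovol.le)).mp hR
  have hkey : 2 ≤ (s0 + sx) * covol := by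
    have h4 : (c2 + c2) ^ 2 = 4 * c4 := by rw [hc24]; ring
    have h5 : c4 * (s0 + sx + (sx + s0)) * covol = 2 * c4 * ((s0 + sx) * covol) := by ring
    rw [h4, h5] at hreal
    have h6 : 0 < 2 * c4 := by linarith
    exact le_of_mul_le_mul_left (by linarith) h6
  have : 2 * covol⁻¹ ≤ s0 + sx := by
    rw [show (2:ℝ) * covol⁻¹ = 2 / covol by ring, div_le_iff₀ hcovol]
    linarith
  linarith
end

section
/- For a euclidean lattice E of rank n with theta function θ(t) = Σ_{v∈E} e^{-πt‖v‖²}, the function t ↦ log θ(t) + (n/2) log t is nondecreasing on (0,∞). -/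
open scoped Real BigOperators RealInnerProductSpace
open MeasureTheory Complex Finset Filter Topology Module

variable {n : ℕ}

lemma gauss_cos {a : ℝ} (ha : 0 < a) (y : EuclideanSpace ℝ (Fin n)) :
    ∫ ξ : EuclideanSpace ℝ (Fin n),
      Real.exp (-(π / a) * ‖ξ‖ ^ 2) * Real.cos (2 * π * ⟪y, ξ⟫) =
      a ^ ((n : ℝ) / 2) * Real.exp (-π * a * ‖y‖ ^ 2) := by
  have hπ := Real.pi_pos
  have hπ' : ((π:ℂ)) ≠ 0 := by exact_mod_cast hπ.ne'
  have ha' : ((a:ℂ)) ≠ 0 := by exact_mod_cast ha.ne'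
  have hb : (0:ℝ) < (((π/a : ℝ) : ℂ)).re := by
    simpa using div_pos Real.pi_pos ha
  have key := GaussianFourier.integral_cexp_neg_mul_sq_norm_add
    (V := EuclideanSpace ℝ (Fin n)) hb (2 * π * Complex.I) y
  have h0 := integral_re (μ := (volume : Measure (EuclideanSpace ℝ (Fin n))))
    (GaussianFourier.integrable_cexp_neg_mul_sq_norm_add hb (2 * π * Complex.I) y)
  simp only [RCLike.re_to_complex] at h0
  have h1 : ∫ ξ : EuclideanSpace ℝ (Fin n),
      Real.exp (-(π / a) * ‖ξ‖ ^ 2) * Real.cos (2 * π * ⟪y, ξ⟫) =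
      (∫ v : EuclideanSpace ℝ (Fin n),
        cexp (-((π/a : ℝ) : ℂ) * (‖v‖:ℂ) ^ 2 + (2 * π * Complex.I) * (⟪y, v⟫ : ℝ))).re := by
    rw [← h0]
    congr 1 with ξ
    have hz : (-((π/a:ℝ):ℂ) * (‖ξ‖:ℂ) ^ 2 + (2 * π * Complex.I) * ((⟪y,ξ⟫ : ℝ):ℂ))
        = Complex.ofReal (-(π/a) * ‖ξ‖ ^ 2) + Complex.ofReal (2 * π * ⟪y,ξ⟫) * Complex.I := by
      push_cast; ring
    rw [hz]
    simp [Complex.exp_re, ← Complex.ofReal_pow]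
  have h2 : ((↑π / ↑(π / a) : ℂ)) = (a : ℂ) := by
    rw [Complex.ofReal_div]
    field_simp
  have h3 : ((2 * (π:ℂ) * Complex.I) ^ 2 * (‖y‖:ℂ) ^ 2 / (4 * ((π / a : ℝ) : ℂ)))
      = ((-π * a * ‖y‖ ^ 2 : ℝ) : ℂ) := by
    rw [Complex.ofReal_div]
    push_cast
    rw [mul_pow, mul_pow, Complex.I_sq]
    field_simp
    ring
  have h4 : ((a:ℂ) ^ ((Module.finrank ℝ (EuclideanSpace ℝ (Fin n)) : ℂ) / 2))
      = ((a ^ ((n:ℝ)/2) : ℝ) : ℂ) := by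
    rw [Complex.ofReal_cpow ha.le]
    norm_num [finrank_euclideanSpace_fin]
  rw [h1, key, h2, h3, h4, ← Complex.ofReal_exp, ← Complex.ofReal_mul, Complex.ofReal_re]
lemma cexp_re_eq (a : ℝ) (y ξ : EuclideanSpace ℝ (Fin n)) :
    (cexp (-((π/a:ℝ):ℂ) * (‖ξ‖:ℂ) ^ 2 + (2 * π * Complex.I) * ((⟪y,ξ⟫ : ℝ):ℂ))).re
      = Real.exp (-(π / a) * ‖ξ‖ ^ 2) * Real.cos (2 * π * ⟪y, ξ⟫) := by
  have hz : (-((π/a:ℝ):ℂ) * (‖ξ‖:ℂ) ^ 2 + (2 * π * Complex.I) * ((⟪y,ξ⟫ : ℝ):ℂ))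
      = Complex.ofReal (-(π/a) * ‖ξ‖ ^ 2) + Complex.ofReal (2 * π * ⟪y,ξ⟫) * Complex.I := by
    push_cast; ring
  rw [hz]
  simp [Complex.exp_re, ← Complex.ofReal_pow]

lemma integrable_gauss_cos {a : ℝ} (ha : 0 < a) (y : EuclideanSpace ℝ (Fin n)) :
    Integrable (fun ξ : EuclideanSpace ℝ (Fin n) =>
      Real.exp (-(π / a) * ‖ξ‖ ^ 2) * Real.cos (2 * π * ⟪y, ξ⟫)) := by
  have hb : (0:ℝ) < (((π/a : ℝ) : ℂ)).re := by
    simpa using div_pos Real.pi_pos ha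
  have h := (GaussianFourier.integrable_cexp_neg_mul_sq_norm_add
    (V := EuclideanSpace ℝ (Fin n)) hb (2 * π * Complex.I) y).re
  simp only [RCLike.re_to_complex] at h
  refine h.congr (Filter.Eventually.of_forall fun ξ => ?_)
  exact cexp_re_eq a y ξ

lemma posdef_sum {s t : ℝ} (hs : 0 < s) (hst : s ≤ t)
    (S : Finset (EuclideanSpace ℝ (Fin n))) :
    0 ≤ ∑ v ∈ S, ∑ w ∈ S,
      (t ^ ((n:ℝ)/2) * Real.exp (-π * t * ‖v - w‖ ^ 2)
        - s ^ ((n:ℝ)/2) * Real.exp (-π * s * ‖v - w‖ ^ 2)) := by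
  have ht : 0 < t := hs.trans_le hst
  have key : ∀ y : EuclideanSpace ℝ (Fin n),
      t ^ ((n:ℝ)/2) * Real.exp (-π * t * ‖y‖ ^ 2)
        - s ^ ((n:ℝ)/2) * Real.exp (-π * s * ‖y‖ ^ 2)
      = ∫ ξ : EuclideanSpace ℝ (Fin n),
          (Real.exp (-(π / t) * ‖ξ‖ ^ 2) - Real.exp (-(π / s) * ‖ξ‖ ^ 2))
            * Real.cos (2 * π * ⟪y, ξ⟫) := by
    intro y
    simp_rw [sub_mul]
    rw [integral_sub (integrable_gauss_cos ht y) (integrable_gauss_cos hs y),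
      gauss_cos ht y, gauss_cos hs y]
  calc (0:ℝ) ≤ ∫ ξ : EuclideanSpace ℝ (Fin n),
      (Real.exp (-(π / t) * ‖ξ‖ ^ 2) - Real.exp (-(π / s) * ‖ξ‖ ^ 2))
        * ((∑ v ∈ S, Real.cos (2 * π * ⟪v, ξ⟫)) ^ 2
          + (∑ v ∈ S, Real.sin (2 * π * ⟪v, ξ⟫)) ^ 2) := by
        refine integral_nonneg fun ξ => ?_
        refine mul_nonneg ?_ (by positivity)
        rw [sub_nonneg]
        apply Real.exp_le_exp.2
        have h1 : π/t ≤ π/s := div_le_div_of_nonneg_left Real.pi_pos.le hs hst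
        have h2 : (0:ℝ) ≤ ‖ξ‖^2 := by positivity
        nlinarith
    _ = ∫ ξ : EuclideanSpace ℝ (Fin n), ∑ v ∈ S, ∑ w ∈ S,
          ((Real.exp (-(π / t) * ‖ξ‖ ^ 2) - Real.exp (-(π / s) * ‖ξ‖ ^ 2))
            * Real.cos (2 * π * ⟪v - w, ξ⟫)) := by
        congr 1 with ξ
        have : ∀ v w : EuclideanSpace ℝ (Fin n),
            Real.cos (2 * π * ⟪v - w, ξ⟫)
              = Real.cos (2 * π * ⟪v, ξ⟫) * Real.cos (2 * π * ⟪w, ξ⟫)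
                + Real.sin (2 * π * ⟪v, ξ⟫) * Real.sin (2 * π * ⟪w, ξ⟫) := by
          intro v w
          rw [inner_sub_left, mul_sub, Real.cos_sub]
        simp only [this]
        simp_rw [← Finset.mul_sum]
        congr 1
        rw [sq, sq, Finset.sum_mul_sum, Finset.sum_mul_sum, ← Finset.sum_add_distrib]
        refine Finset.sum_congr rfl fun v _ => ?_
        rw [← Finset.sum_add_distrib]
    _ = ∑ v ∈ S, ∑ w ∈ S,
          (t ^ ((n:ℝ)/2) * Real.exp (-π * t * ‖v - w‖ ^ 2)
            - s ^ ((n:ℝ)/2) * Real.exp (-π * s * ‖v - w‖ ^ 2)) := by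
        rw [integral_finset_sum]
        · refine Finset.sum_congr rfl fun v _ => ?_
          rw [integral_finset_sum]
          · exact Finset.sum_congr rfl fun w _ => (key (v - w)).symm
          · intro w _
            simp_rw [sub_mul]
            exact (integrable_gauss_cos ht _).sub (integrable_gauss_cos hs _)
        · intro v _
          apply integrable_finset_sum
          intro w _
          simp_rw [sub_mul]
          exact (integrable_gauss_cos ht _).sub (integrable_gauss_cos hs _)

lemma summable_int_exp {c : ℝ} (hc : 0 < c) :
    Summable fun k : ℤ => Real.exp (-c * (k : ℝ) ^ 2) := by
  have hgeo : Summable fun k : ℕ => Real.exp (-c) ^ k :=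
    summable_geometric_of_lt_one (Real.exp_pos _).le
      (Real.exp_lt_one_iff.2 (by linarith))
  have hnat : Summable fun k : ℕ => Real.exp (-c * (k : ℝ) ^ 2) := by
    refine Summable.of_nonneg_of_le (fun k => (Real.exp_pos _).le) (fun k => ?_) hgeo
    rw [← Real.exp_nat_mul]
    apply Real.exp_le_exp.2
    have h1 : (k : ℝ) ≤ (k : ℝ) ^ 2 := by
      exact_mod_cast Nat.le_self_pow two_ne_zero k
    nlinarith
  apply Summable.of_nat_of_neg
  · exact_mod_cast hnat
  · refine hnat.congr fun k => ?_
    push_cast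
    ring_nf
lemma summable_pi_int_fin {N : ℕ} {c : ℝ} (hc : 0 < c) :
    Summable fun m : Fin N → ℤ => Real.exp (-c * ∑ i, (m i : ℝ) ^ 2) := by
  induction N with
  | zero => exact .of_finite
  | succ N ih =>
      have h := (summable_int_exp hc).mul_of_nonneg ih
        (fun _ => (Real.exp_pos _).le) (fun _ => (Real.exp_pos _).le)
      rw [← (Fin.consEquiv (fun _ : Fin (N+1) => ℤ)).summable_iff]
      refine h.congr fun p => ?_
      simp only [Function.comp, Fin.consEquiv_apply]
      rw [Fin.sum_univ_succ, mul_add, Real.exp_add]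
      simp [Fin.cons_zero, Fin.cons_succ]

lemma summable_pi_int {ι : Type*} [Fintype ι] {c : ℝ} (hc : 0 < c) :
    Summable fun m : ι → ℤ => Real.exp (-c * ∑ i, (m i : ℝ) ^ 2) := by
  classical
  let e := Fintype.equivFin ι
  rw [← (Equiv.arrowCongr e.symm (Equiv.refl ℤ)).summable_iff]
  refine (summable_pi_int_fin (N := Fintype.card ι) hc).congr fun m => ?_
  simp only [Function.comp_def, Equiv.arrowCongr_apply, Equiv.refl_apply, Equiv.symm_symm]
  rw [← Equiv.sum_comp e (fun j => ((m j : ℝ)) ^ 2)]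

lemma summable_lattice_exp {n : ℕ} (L : Submodule ℤ (EuclideanSpace ℝ (Fin n)))
    [DiscreteTopology L] [IsZLattice ℝ L] {a : ℝ} (ha : 0 < a) :
    Summable fun v : L => Real.exp (-π * a * ‖(v : EuclideanSpace ℝ (Fin n))‖ ^ 2) := by
  classical
  have hfin : Module.Finite ℤ L := ZLattice.module_finite ℝ L
  have hfree : Module.Free ℤ L := ZLattice.module_free ℝ L
  set ι := Module.Free.ChooseBasisIndex ℤ L with hι
  let b : Basis ι ℤ L := Module.Free.chooseBasis ℤ L
  let bE : Basis ι ℝ (EuclideanSpace ℝ (Fin n)) := Basis.ofZLatticeBasis ℝ L b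
  -- coordinate functionals are bounded
  let g : ι → (EuclideanSpace ℝ (Fin n)) →L[ℝ] ℝ :=
    fun i => LinearMap.toContinuousLinearMap (bE.coord i)
  set C : ℝ := (∑ i, ‖g i‖) + 1 with hC
  have hC0 : 0 < C := by
    have : (0:ℝ) ≤ ∑ i, ‖g i‖ := Finset.sum_nonneg fun i _ => norm_nonneg _
    linarith
  have hCb : ∀ (x : EuclideanSpace ℝ (Fin n)) (i : ι), |bE.repr x i| ≤ C * ‖x‖ := by
    intro x i
    have h1 : |bE.repr x i| = ‖g i x‖ := by
      simp [g, Basis.coord_apply]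
    have h2 : ‖g i x‖ ≤ ‖g i‖ * ‖x‖ := (g i).le_opNorm x
    have h3 : ‖g i‖ ≤ C := by
      rw [hC]
      have := Finset.single_le_sum (f := fun i => ‖g i‖)
        (fun i _ => norm_nonneg _) (Finset.mem_univ i)
      linarith
    calc |bE.repr x i| ≤ ‖g i‖ * ‖x‖ := h1 ▸ h2
      _ ≤ C * ‖x‖ := by
        exact mul_le_mul_of_nonneg_right h3 (norm_nonneg _)
  set N : ℕ := Fintype.card ι
  set c : ℝ := π * a / (N * C ^ 2 + 1) with hc
  have hc0 : 0 < c := by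
    apply div_pos (by positivity)
    positivity
  -- comparison
  have hcomp : ∀ v : L, Real.exp (-π * a * ‖(v : EuclideanSpace ℝ (Fin n))‖ ^ 2)
      ≤ Real.exp (-c * ∑ i, ((b.repr v i : ℝ)) ^ 2) := by
    intro v
    apply Real.exp_le_exp.2
    have hsum : ∑ i, ((b.repr v i : ℝ)) ^ 2 ≤ N * (C * ‖(v : EuclideanSpace ℝ (Fin n))‖) ^ 2 := by
      calc ∑ i, ((b.repr v i : ℝ)) ^ 2
          ≤ ∑ _i : ι, (C * ‖(v : EuclideanSpace ℝ (Fin n))‖) ^ 2 := by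
            apply Finset.sum_le_sum
            intro i _
            have := hCb (v : EuclideanSpace ℝ (Fin n)) i
            rw [Basis.ofZLatticeBasis_repr_apply] at this
            have habs : |((b.repr v i : ℝ))| ≤ C * ‖(v : EuclideanSpace ℝ (Fin n))‖ := by
              exact_mod_cast this
            calc ((b.repr v i : ℝ)) ^ 2 = |((b.repr v i : ℝ))| ^ 2 := (_root_.sq_abs _).symm
              _ ≤ (C * ‖(v : EuclideanSpace ℝ (Fin n))‖) ^ 2 := by
                apply pow_le_pow_left₀ (abs_nonneg _) habs
        _ = N * (C * ‖(v : EuclideanSpace ℝ (Fin n))‖) ^ 2 := by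
            rw [Finset.sum_const, Finset.card_univ, nsmul_eq_mul]
    have hNC : c * (N * C ^ 2) ≤ π * a := by
      rw [hc]
      rw [div_mul_eq_mul_div, div_le_iff₀ (by positivity)]
      have h1 : (0:ℝ) ≤ π * a := by positivity
      nlinarith
    have hn2 : (0:ℝ) ≤ ‖(v : EuclideanSpace ℝ (Fin n))‖ ^ 2 := by positivity
    nlinarith [hC0, hn2, sq_nonneg (C * ‖(v : EuclideanSpace ℝ (Fin n))‖)]
  refine Summable.of_nonneg_of_le (fun v => (Real.exp_pos _).le) hcomp ?_
  -- transfer along the basis coordinates equivalence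
  let ψ : L ≃ (ι → ℤ) := b.equivFun.toEquiv
  have := (summable_pi_int (ι := ι) hc0)
  rw [← ψ.summable_iff] at this
  refine this.congr fun v => ?_
  simp only [Function.comp_def]
  congr 1

set_option maxHeartbeats 1000000 in
lemma theta_mul_mono (L : Submodule ℤ (EuclideanSpace ℝ (Fin n)))
    [DiscreteTopology L] [IsZLattice ℝ L] {s t : ℝ} (hs : 0 < s) (hst : s ≤ t) :
    s ^ ((n:ℝ)/2) * (∑' v : L, Real.exp (-π * s * ‖(v : EuclideanSpace ℝ (Fin n))‖ ^ 2))
      ≤ t ^ ((n:ℝ)/2) * (∑' v : L, Real.exp (-π * t * ‖(v : EuclideanSpace ℝ (Fin n))‖ ^ 2)) := by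
  classical
  have ht : 0 < t := hs.trans_le hst
  have hSs := summable_lattice_exp L hs
  have hSt := summable_lattice_exp L ht
  set F : EuclideanSpace ℝ (Fin n) → ℝ := fun y =>
    t ^ ((n:ℝ)/2) * Real.exp (-π * t * ‖y‖ ^ 2)
      - s ^ ((n:ℝ)/2) * Real.exp (-π * s * ‖y‖ ^ 2) with hF
  have hFsum : Summable fun v : L => F ((v : EuclideanSpace ℝ (Fin n))) :=
    (hSt.mul_left _).sub (hSs.mul_left _)
  suffices h : 0 ≤ ∑' v : L, F ((v : EuclideanSpace ℝ (Fin n))) by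
    rw [hF] at h
    rw [Summable.tsum_sub (hSt.mul_left _) (hSs.mul_left _), tsum_mul_left, tsum_mul_left] at h
    linarith
  -- basis setup
  have hfin : Module.Finite ℤ L := ZLattice.module_finite ℝ L
  have hfree : Module.Free ℤ L := ZLattice.module_free ℝ L
  set ι := Module.Free.ChooseBasisIndex ℤ L with hιdef
  let b : Basis ι ℤ L := Module.Free.chooseBasis ℤ L
  let ψ : (ι → ℤ) ≃ₗ[ℤ] L := b.equivFun.symm
  let e : (ι → ℤ) ≃ L := ψ.toEquiv
  set φ : (ι → ℤ) → EuclideanSpace ℝ (Fin n) :=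
    fun m => ((ψ m : L) : EuclideanSpace ℝ (Fin n)) with hφ
  have hφsub : ∀ m k : ι → ℤ, φ (m - k) = φ m - φ k := by
    intro m k
    rw [hφ]
    simp only [map_sub]
    push_cast
    ring
  have hφinj : Function.Injective φ :=
    Subtype.val_injective.comp ψ.injective
  set G : (ι → ℤ) → ℝ := fun m => F (φ m) with hG
  have htsumG : ∑' v : L, F ((v : EuclideanSpace ℝ (Fin n))) = ∑' m, G m :=
    (e.tsum_eq fun v : L => F ((v : EuclideanSpace ℝ (Fin n)))).symm
  have hGsum : Summable G := by
    rw [← e.summable_iff] at hFsum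
    exact hFsum
  rw [htsumG]
  -- boxes
  set N : ℕ := Fintype.card ι with hN
  set B : ℕ → Finset (ι → ℤ) := fun M => Fintype.piFinset fun _ => Finset.Icc (-(M:ℤ)) M with hB
  have hBmem : ∀ M (m : ι → ℤ), m ∈ B M ↔ ∀ i, |m i| ≤ (M:ℤ) := by
    intro M m
    simp [hB, Fintype.mem_piFinset, abs_le]
  have hBcard : ∀ M, (B M).card = (2*M+1) ^ N := by
    intro M
    rw [hB]
    rw [Fintype.card_piFinset]
    simp only [Int.card_Icc]
    rw [Finset.prod_const, Finset.card_univ]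
    congr 1
    omega
  -- counting identity
  set cnt : ℕ → (ι → ℤ) → ℕ := fun M u => ((B M).filter (fun m => m - u ∈ B M)).card with hcnt
  have hcount : ∀ M, ∑ m ∈ B M, ∑ k ∈ B M, G (m - k)
      = ∑' u, (cnt M u : ℝ) * G u := by
    intro M
    have h1 : ∀ m : ι → ℤ, ∑ k ∈ B M, G (m - k)
        = ∑' u, Set.indicator {u | m - u ∈ B M} G u := by
      intro m
      have hzero : ∀ u ∉ (B M).image (fun k => m - k),
          Set.indicator {u | m - u ∈ B M} G u = 0 := by
        intro u hu
        apply Set.indicator_of_notMem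
        intro hmem
        exact hu (Finset.mem_image.2 ⟨m - u, hmem, by simp⟩)
      rw [tsum_eq_sum hzero,
        Finset.sum_image (fun k _ k' _ h => sub_right_injective h)]
      refine Finset.sum_congr rfl fun k hk => ?_
      rw [Set.indicator_of_mem (by simpa using hk)]
    simp_rw [h1]
    rw [← Summable.tsum_finsetSum (fun m _ => hGsum.indicator _)]
    congr 1 with u
    simp only [Set.indicator_apply, Set.mem_setOf_eq]
    rw [Finset.sum_ite, Finset.sum_const, Finset.sum_const_zero, add_zero, nsmul_eq_mul]
  -- positivity of box sums
  have hpos : ∀ M, 0 ≤ ∑ m ∈ B M, ∑ k ∈ B M, G (m - k) := by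
    intro M
    have h := posdef_sum (n := n) hs hst ((B M).image φ)
    rw [Finset.sum_image (fun m _ m' _ h => hφinj h)] at h
    refine le_of_le_of_eq h (Finset.sum_congr rfl fun m _ => ?_)
    rw [Finset.sum_image (fun m _ m' _ h => hφinj h)]
    refine Finset.sum_congr rfl fun k _ => ?_
    rw [← hφsub, hG, hF]
  -- ratios
  set r : ℕ → (ι → ℤ) → ℝ := fun M u => (cnt M u : ℝ) / ((2*M+1 : ℕ) : ℝ) ^ N with hr
  have hDpos : ∀ M : ℕ, (0:ℝ) < ((2*M+1 : ℕ) : ℝ) ^ N := by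
    intro M; positivity
  have hrle : ∀ M u, r M u ≤ 1 := by
    intro M u
    rw [hr, div_le_one (hDpos M)]
    have : cnt M u ≤ (B M).card := Finset.card_filter_le _ _
    rw [hBcard M] at this
    exact_mod_cast this
  have hrnn : ∀ M u, 0 ≤ r M u := by
    intro M u
    exact div_nonneg (Nat.cast_nonneg _) (le_of_lt (hDpos M))
  -- ratio tends to 1
  have hrlim : ∀ u : ι → ℤ, Tendsto (fun M => r M u) atTop (𝓝 1) := by
    intro u
    have hlow : ∀ᶠ M : ℕ in atTop,
        ∏ i : ι, ((2*(M:ℝ)+1 - 2*|(u i : ℝ)|) / (2*(M:ℝ)+1)) ≤ r M u := by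
      have hKex : ∃ K : ℕ, ∀ i, |u i| ≤ (K:ℤ) := by
        refine ⟨(Finset.univ.sup fun i => (u i).natAbs), fun i => ?_⟩
        rw [Int.abs_eq_natAbs]
        exact_mod_cast Finset.le_sup (f := fun i => (u i).natAbs) (Finset.mem_univ i)
      obtain ⟨K, hK⟩ := hKex
      filter_upwards [Filter.eventually_ge_atTop K] with M hM
      have hKM : ∀ i, |u i| ≤ (M:ℤ) := fun i => le_trans (hK i) (by exact_mod_cast hM)
      -- lower box
      set B' : Finset (ι → ℤ) :=
        Fintype.piFinset (fun i => Finset.Icc (-(M:ℤ) + |u i|) ((M:ℤ) - |u i|)) with hB'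
      have hsub : B' ⊆ (B M).filter (fun m => m - u ∈ B M) := by
        intro m hm
        rw [Fintype.mem_piFinset] at hm
        rw [Finset.mem_filter, hBmem, hBmem]
        constructor
        · intro i
          have h1 := hm i
          rw [Finset.mem_Icc] at h1
          have h2 := abs_nonneg (u i)
          rw [abs_le]
          omega
        · intro i
          have h1 := hm i
          rw [Finset.mem_Icc] at h1
          simp only [Pi.sub_apply]
          have h3 := abs_le.1 (le_refl |u i|)
          obtain ⟨h4, h5⟩ := h3
          rw [abs_le]
          omega
      have hcard : ∏ i : ι, ((2*(M:ℤ)+1 - 2*|u i|).toNat) ≤ cnt M u := by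
        rw [hcnt]
        calc ∏ i : ι, ((2*(M:ℤ)+1 - 2*|u i|).toNat) = B'.card := by
              rw [hB', Fintype.card_piFinset]
              refine Finset.prod_congr rfl fun i _ => ?_
              rw [Int.card_Icc]
              congr 1
              ring
          _ ≤ _ := Finset.card_le_card hsub
      have hfac : ∀ i : ι, (((2*(M:ℤ)+1 - 2*|u i|).toNat : ℕ) : ℝ)
          = 2*(M:ℝ)+1 - 2*|(u i : ℝ)| := by
        intro i
        have h0 : (0:ℤ) ≤ 2*(M:ℤ)+1 - 2*|u i| := by have := hKM i; omega
        have h1 : (((2*(M:ℤ)+1 - 2*|u i|) : ℤ) : ℝ) = 2*(M:ℝ)+1 - 2*|(u i : ℝ)| := by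
          push_cast
          ring
        rw [← h1]
        exact_mod_cast congrArg (Int.cast : ℤ → ℝ) (Int.toNat_of_nonneg h0)
      calc ∏ i : ι, ((2*(M:ℝ)+1 - 2*|(u i : ℝ)|) / (2*(M:ℝ)+1))
          = (∏ i : ι, (2*(M:ℝ)+1 - 2*|(u i : ℝ)|)) / (2*(M:ℝ)+1) ^ N := by
            rw [Finset.prod_div_distrib, Finset.prod_const, Finset.card_univ]
        _ ≤ (cnt M u : ℝ) / (2*(M:ℝ)+1) ^ N := by
            have hnum : ∏ i : ι, (2*(M:ℝ)+1 - 2*|(u i : ℝ)|) ≤ (cnt M u : ℝ) := by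
              have heq : ∏ i : ι, (2*(M:ℝ)+1 - 2*|(u i : ℝ)|)
                  = ((∏ i : ι, ((2*(M:ℤ)+1 - 2*|u i|).toNat) : ℕ) : ℝ) := by
                rw [Nat.cast_prod]
                exact (Finset.prod_congr rfl fun i _ => (hfac i).symm)
              rw [heq]
              exact_mod_cast hcard
            have hden : (0:ℝ) < (2*(M:ℝ)+1) ^ N := by positivity
            exact by gcongr
        _ = r M u := by
            rw [hr]
            push_cast
            ring
    -- the lower bound tends to 1
    have hM1 : Tendsto (fun M : ℕ => 2*(M:ℝ)+1) atTop atTop := by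
      apply Filter.tendsto_atTop_add_const_right
      exact (tendsto_natCast_atTop_atTop (R := ℝ)).const_mul_atTop two_pos
    have hlow_lim : Tendsto
        (fun M : ℕ => ∏ i : ι, ((2*(M:ℝ)+1 - 2*|(u i : ℝ)|) / (2*(M:ℝ)+1)))
        atTop (𝓝 1) := by
      have h1 : Tendsto (fun M : ℕ => ∏ i : ι, ((2*(M:ℝ)+1 - 2*|(u i : ℝ)|) / (2*(M:ℝ)+1)))
          atTop (𝓝 (∏ _i : ι, (1:ℝ))) := by
        apply tendsto_finset_prod
        intro i _
        have h3 : Tendsto (fun M : ℕ => 1 - 2*|(u i : ℝ)| * (2*(M:ℝ)+1)⁻¹) atTop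
            (𝓝 (1 - 2*|(u i : ℝ)| * 0)) :=
          tendsto_const_nhds.sub ((hM1.inv_tendsto_atTop).const_mul _)
        rw [mul_zero, sub_zero] at h3
        refine h3.congr fun M => ?_
        have hne : 2*(M:ℝ)+1 ≠ 0 := by positivity
        field_simp
      simpa using h1
    exact tendsto_of_tendsto_of_tendsto_of_le_of_le' hlow_lim tendsto_const_nhds
      hlow (Filter.Eventually.of_forall fun M => hrle M u)
  -- dominated convergence
  have hdom := tendsto_tsum_of_dominated_convergence
    (𝓕 := (atTop : Filter ℕ)) (f := fun M u => r M u * G u) (g := G)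
    (bound := fun u => |G u|) hGsum.abs
    (fun u => by simpa using (hrlim u).mul_const (G u))
    (Filter.Eventually.of_forall fun M u => by
      rw [Real.norm_eq_abs, abs_mul, _root_.abs_of_nonneg (hrnn M u)]
      calc r M u * |G u| ≤ 1 * |G u| :=
            mul_le_mul_of_nonneg_right (hrle M u) (abs_nonneg _)
        _ = |G u| := one_mul _)
  refine ge_of_tendsto' hdom fun M => ?_
  have hrewrite : ∑' u, r M u * G u
      = (((2*M+1 : ℕ) : ℝ) ^ N)⁻¹ * ∑ m ∈ B M, ∑ k ∈ B M, G (m - k) := by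
    rw [hcount M, ← tsum_mul_left]
    congr 1 with u
    rw [hr]
    ring
  rw [hrewrite]
  exact mul_nonneg (inv_nonneg.2 (hDpos M).le) (hpos M)

/-- For a euclidean lattice `E` of rank `n` with theta function
`θ(t) = Σ_{v∈E} e^{-πt‖v‖²}`, the function `t ↦ log θ(t) + (n/2) log t` is nondecreasing on
`(0,∞)`. -/
theorem log_theta_add_monotone {n : ℕ}
    (L : Submodule ℤ (EuclideanSpace ℝ (Fin n)))
    [DiscreteTopology L] [IsZLattice ℝ L] :
    ∀ s t : ℝ, 0 < s → s ≤ t →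
      Real.log (∑' v : L, Real.exp (-π * s * ‖(v : EuclideanSpace ℝ (Fin n))‖ ^ 2)) +
          ((n : ℝ) / 2) * Real.log s ≤
        Real.log (∑' v : L, Real.exp (-π * t * ‖(v : EuclideanSpace ℝ (Fin n))‖ ^ 2)) +
          ((n : ℝ) / 2) * Real.log t := by
  intro s t hs hst
  have ht : 0 < t := hs.trans_le hst
  have key := theta_mul_mono L hs hst
  have hθ : ∀ a : ℝ, 0 < a →
      1 ≤ ∑' v : L, Real.exp (-π * a * ‖(v : EuclideanSpace ℝ (Fin n))‖ ^ 2) := by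
    intro a ha
    have hsum := summable_lattice_exp L ha
    have h0 : Real.exp (-π * a * ‖((0 : L) : EuclideanSpace ℝ (Fin n))‖ ^ 2) = 1 := by
      simp
    calc (1:ℝ) = Real.exp (-π * a * ‖((0 : L) : EuclideanSpace ℝ (Fin n))‖ ^ 2) := h0.symm
      _ ≤ _ := Summable.le_tsum hsum 0 (fun v _ => (Real.exp_pos _).le)
  have hθs := hθ s hs
  have hθt := hθ t ht
  have hps : (0:ℝ) < s ^ ((n:ℝ)/2) *
      (∑' v : L, Real.exp (-π * s * ‖(v : EuclideanSpace ℝ (Fin n))‖ ^ 2)) := by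
    apply mul_pos (Real.rpow_pos_of_pos hs _)
    linarith
  have hlog := Real.log_le_log hps key
  rw [Real.log_mul (ne_of_gt (Real.rpow_pos_of_pos hs _)) (by linarith),
    Real.log_mul (ne_of_gt (Real.rpow_pos_of_pos ht _)) (by linarith),
    Real.log_rpow hs, Real.log_rpow ht] at hlog
  linarith
end

section
/- If E is a euclidean lattice of positive rank n with first minimum λ₁(E) ≥ 1, then h⁰_θ(E) ≤ −log(1 − 1/(2π)) + (n/2) log n. -/
open scoped Real
open MeasureTheory Metric
open scoped ENNReal NNReal



lemma count_lemma {n : ℕ} (hn : 0 < n) (t : Finset (EuclideanSpace ℝ (Fin n)))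
    (hsep : ∀ x ∈ t, ∀ y ∈ t, x ≠ y → 1 ≤ dist x y)
    {R : ℝ} (hR : 0 ≤ R) (hRt : ∀ x ∈ t, ‖x‖ ≤ R) :
    (t.card : ℝ) ≤ (2*R+1)^n := by
  haveI : Nonempty (Fin n) := ⟨⟨0, hn⟩⟩
  have hdisj : Set.PairwiseDisjoint (↑t) (fun x : EuclideanSpace ℝ (Fin n) => ball x (1/2)) := by
    intro x hx y hy hxy
    exact ball_disjoint_ball (by linarith [hsep x hx y hy hxy])
  have hmeas : volume (⋃ x ∈ t, ball x (1/2)) = ∑ x ∈ t, volume (ball x (1/2)) :=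
    measure_biUnion_finset hdisj (fun b _ => measurableSet_ball)
  have hsub : (⋃ x ∈ t, ball x (1/2)) ⊆ ball (0 : EuclideanSpace ℝ (Fin n)) (R + 1/2) := by
    intro z hz
    simp only [Set.mem_iUnion] at hz
    obtain ⟨x, hx, hzx⟩ := hz
    rw [mem_ball] at hzx ⊢
    have := hRt x hx
    calc dist z 0 ≤ dist z x + dist x 0 := dist_triangle _ _ _
      _ < 1/2 + R := by rw [dist_zero_right]; linarith
      _ = R + 1/2 := by ring
  have hvol : ∀ (x : EuclideanSpace ℝ (Fin n)) (r : ℝ), 0 ≤ r →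
      volume (ball x r) = ENNReal.ofReal (r^n) * volume (ball (0:EuclideanSpace ℝ (Fin n)) 1) := by
    intro x r hr
    rw [Measure.addHaar_ball volume x hr, finrank_euclideanSpace, Fintype.card_fin]
  have key : (t.card : ℝ≥0∞) * (ENNReal.ofReal ((1/2:ℝ)^n) * volume (ball (0:EuclideanSpace ℝ (Fin n)) 1))
      ≤ ENNReal.ofReal ((R+1/2)^n) * volume (ball (0:EuclideanSpace ℝ (Fin n)) 1) := by
    calc (t.card : ℝ≥0∞) * (ENNReal.ofReal ((1/2:ℝ)^n) * volume (ball (0:EuclideanSpace ℝ (Fin n)) 1))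
        = ∑ x ∈ t, volume (ball x (1/2)) := by
          rw [Finset.sum_congr rfl (fun x hx => hvol x (1/2) (by norm_num)), Finset.sum_const,
            nsmul_eq_mul]
      _ = volume (⋃ x ∈ t, ball x (1/2)) := hmeas.symm
      _ ≤ volume (ball (0:EuclideanSpace ℝ (Fin n)) (R + 1/2)) := measure_mono hsub
      _ = _ := hvol 0 _ (by linarith)
  have hB0 : volume (ball (0:EuclideanSpace ℝ (Fin n)) 1) ≠ 0 :=
    (measure_ball_pos volume _ one_pos).ne'
  have hBtop : volume (ball (0:EuclideanSpace ℝ (Fin n)) 1) ≠ ⊤ :=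
    measure_ball_lt_top.ne
  rw [← mul_assoc] at key
  have key3 : (t.card : ℝ≥0∞) * ENNReal.ofReal ((1/2:ℝ)^n) ≤ ENNReal.ofReal ((R+1/2)^n) :=
    (ENNReal.mul_le_mul_iff_left hB0 hBtop).mp key
  have h12 : (0:ℝ) < (1/2:ℝ)^n := by positivity
  have : (t.card : ℝ) * (1/2:ℝ)^n ≤ (R+1/2)^n := by
    have := ENNReal.toReal_mono (by simp) key3
    rw [ENNReal.toReal_mul, ENNReal.toReal_ofReal h12.le, ENNReal.toReal_ofReal (by positivity)] at this
    simpa using this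
  have hfin : (t.card : ℝ) ≤ (R+1/2)^n / (1/2)^n := (le_div_iff₀ h12).mpr this
  calc (t.card : ℝ) ≤ (R+1/2)^n / (1/2)^n := hfin
    _ = (2*R+1)^n := by rw [div_eq_iff h12.ne', ← mul_pow]; ring_nf




noncomputable def gser (n k : ℕ) : ℝ := ((k:ℝ)+4)^n * Real.exp (-π * (1 + (k:ℝ)/2)^2)

noncomputable def useq (k : ℕ) : ℝ :=
  Real.exp (((k:ℝ)+4)^2/(2*Real.exp 1) - π * (1 + (k:ℝ)/2)^2)

lemma gser_nonneg (n k : ℕ) : 0 ≤ gser n k := by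
  unfold gser; positivity

lemma shell_main {n : ℕ} (hn : 0 < n)
    (L : Submodule ℤ (EuclideanSpace ℝ (Fin n)))
    (hlam : ∀ v ∈ L, v ≠ 0 → 1 ≤ ‖v‖)
    (hg : Summable (gser n)) :
    Summable (fun v : L => Real.exp (-π * ‖(v : EuclideanSpace ℝ (Fin n))‖ ^ 2)) ∧
    (∑' v : L, Real.exp (-π * ‖(v : EuclideanSpace ℝ (Fin n))‖ ^ 2)) ≤ 1 + ∑' k : ℕ, gser n k := by
  classical
  set E := EuclideanSpace ℝ (Fin n)
  set f : L → ℝ := fun v => Real.exp (-π * ‖(v : E)‖ ^ 2) with hf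
  have hfnn : ∀ v, 0 ≤ f v := fun v => (Real.exp_pos _).le
  set F : L → ℝ≥0∞ := fun v => ENNReal.ofReal (f v) with hF
  set G : ℕ → ℝ≥0∞ := fun k => ENNReal.ofReal (gser n k) with hG
  set idx : L → ℕ := fun v => ⌊2*(‖(v : E)‖-1)⌋₊ with hidx
  -- finset bound
  have hfin : ∀ s : Finset L, ∑ v ∈ s, F v ≤ 1 + ∑' k, G k := by
    intro s
    set t := s.erase 0 with ht
    have h1 : ∑ v ∈ s, F v ≤ F 0 + ∑ v ∈ t, F v := by
      by_cases h0 : (0 : L) ∈ s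
      · rw [ht, ← Finset.add_sum_erase s F h0]
      · rw [ht, Finset.erase_eq_of_notMem h0]
        exact le_add_of_nonneg_left (zero_le)
    have hF0 : F 0 = 1 := by
      simp [hF, hf]
    set K := t.sup idx + 1 with hK
    have hmaps : ∀ v ∈ t, idx v ∈ Finset.range K := by
      intro v hv
      rw [Finset.mem_range, hK]
      exact Nat.lt_succ_of_le (Finset.le_sup hv)
    have h2 : ∑ v ∈ t, F v = ∑ k ∈ Finset.range K, ∑ v ∈ t.filter (fun v => idx v = k), F v :=
      (Finset.sum_fiberwise_of_maps_to hmaps F).symm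
    have h3 : ∀ k ∈ Finset.range K, ∑ v ∈ t.filter (fun v => idx v = k), F v ≤ G k := by
      intro k _
      set u := t.filter (fun v => idx v = k) with hu
      have hvsize : ∀ v ∈ u, 1 + (k:ℝ)/2 ≤ ‖(v : E)‖ ∧ ‖(v : E)‖ ≤ 1 + ((k:ℝ)+1)/2 := by
        intro v hv
        rw [hu, Finset.mem_filter] at hv
        obtain ⟨hvt, hvk⟩ := hv
        have hv0 : (v : E) ≠ 0 := by
          have : v ≠ 0 := Finset.ne_of_mem_erase (ht ▸ hvt)
          simpa [Submodule.coe_eq_zero] using this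
        have hge1 : 1 ≤ ‖(v : E)‖ := hlam v v.2 hv0
        have hnn : 0 ≤ 2*(‖(v : E)‖-1) := by linarith
        have hfl : (⌊2*(‖(v : E)‖-1)⌋₊ : ℕ) = k := hvk
        have hle : (k:ℝ) ≤ 2*(‖(v : E)‖-1) := by
          rw [← hfl]; exact Nat.floor_le hnn
        have hlt : 2*(‖(v : E)‖-1) < (k:ℝ) + 1 := by
          rw [← hfl]
          push_cast
          exact Nat.lt_floor_add_one _
        constructor
        · linarith
        · linarith
      -- count
      have hcard : (u.card : ℝ) ≤ ((k:ℝ)+4)^n := by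
        have himg := count_lemma hn (u.image (fun v : L => (v : E)))
          (by
            intro x hx y hy hxy
            rw [Finset.mem_image] at hx hy
            obtain ⟨a, _, rfl⟩ := hx
            obtain ⟨b, _, rfl⟩ := hy
            have hab : a ≠ b := fun h => hxy (by rw [h])
            have hab0 : a - b ≠ 0 := sub_ne_zero.mpr hab
            have : 1 ≤ ‖((a - b : L) : E)‖ := by
              apply hlam _ (a - b).2
              simp only [AddSubgroupClass.coe_sub, ne_eq, sub_eq_zero]
              exact fun h => hab (Subtype.ext h)
            rw [dist_eq_norm]
            simpa using this)
          (R := 1 + ((k:ℝ)+1)/2) (by positivity)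
          (by
            intro x hx
            rw [Finset.mem_image] at hx
            obtain ⟨a, ha, rfl⟩ := hx
            exact (hvsize a ha).2)
        have hcardeq : (u.image (fun v : L => (v : E))).card = u.card :=
          Finset.card_image_of_injective u Subtype.coe_injective
        rw [hcardeq] at himg
        calc (u.card : ℝ) ≤ (2*(1 + ((k:ℝ)+1)/2)+1)^n := himg
          _ = ((k:ℝ)+4)^n := by ring_nf
      have hterm : ∀ v ∈ u, F v ≤ ENNReal.ofReal (Real.exp (-π * (1 + (k:ℝ)/2)^2)) := by
        intro v hv
        apply ENNReal.ofReal_le_ofReal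
        apply Real.exp_le_exp.mpr
        have h1k := (hvsize v hv).1
        have hk0 : (0:ℝ) ≤ 1 + (k:ℝ)/2 := by positivity
        have : (1 + (k:ℝ)/2)^2 ≤ ‖(v : E)‖^2 := by nlinarith
        nlinarith [Real.pi_pos]
      calc ∑ v ∈ u, F v ≤ ∑ _v ∈ u, ENNReal.ofReal (Real.exp (-π * (1 + (k:ℝ)/2)^2)) :=
            Finset.sum_le_sum hterm
        _ = (u.card : ℝ≥0∞) * ENNReal.ofReal (Real.exp (-π * (1 + (k:ℝ)/2)^2)) := by
            rw [Finset.sum_const, nsmul_eq_mul]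
        _ ≤ ENNReal.ofReal (((k:ℝ)+4)^n) * ENNReal.ofReal (Real.exp (-π * (1 + (k:ℝ)/2)^2)) := by
            apply mul_le_mul_left
            rw [show ((u.card : ℝ≥0∞)) = ENNReal.ofReal (u.card : ℝ) by
              simp [ENNReal.ofReal_natCast]]
            exact ENNReal.ofReal_le_ofReal hcard
        _ = G k := by
            rw [hG, ← ENNReal.ofReal_mul (by positivity)]
            rfl
    calc ∑ v ∈ s, F v ≤ F 0 + ∑ v ∈ t, F v := h1
      _ = 1 + ∑ k ∈ Finset.range K, ∑ v ∈ t.filter (fun v => idx v = k), F v := by rw [hF0, h2]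
      _ ≤ 1 + ∑ k ∈ Finset.range K, G k := add_le_add_right (Finset.sum_le_sum h3) _
      _ ≤ 1 + ∑' k, G k := add_le_add_right (ENNReal.sum_le_tsum _) _
  have htsum : ∑' v : L, F v ≤ 1 + ∑' k, G k := by
    rw [ENNReal.tsum_eq_iSup_sum]
    exact iSup_le hfin
  have hGsum : ∑' k, G k = ENNReal.ofReal (∑' k, gser n k) := by
    rw [ENNReal.ofReal_tsum_of_nonneg (gser_nonneg n) hg]
  have hRHS : (1 : ℝ≥0∞) + ∑' k, G k = ENNReal.ofReal (1 + ∑' k, gser n k) := by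
    rw [hGsum, ENNReal.ofReal_add (by norm_num) (tsum_nonneg (gser_nonneg n)), ENNReal.ofReal_one]
  rw [hRHS] at htsum
  have hFtop : ∀ v, F v ≠ ⊤ := fun v => ENNReal.ofReal_ne_top
  have hne : ∑' v : L, F v ≠ ⊤ := (lt_of_le_of_lt htsum ENNReal.ofReal_lt_top).ne
  have hsummable : Summable f := by
    have := ENNReal.summable_toReal hne
    convert this using 2 with v
    rw [hF, ENNReal.toReal_ofReal (hfnn v)]
  constructor
  · exact hsummable
  · have heq : (∑' v : L, F v).toReal = ∑' v : L, f v := by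
      rw [ENNReal.tsum_toReal_eq hFtop]
      exact tsum_congr fun v => ENNReal.toReal_ofReal (hfnn v)
    rw [hf] at heq
    rw [← heq]
    calc (∑' v : L, F v).toReal ≤ (ENNReal.ofReal (1 + ∑' k, gser n k)).toReal :=
          ENNReal.toReal_mono ENNReal.ofReal_ne_top htsum
      _ = 1 + ∑' k, gser n k := ENNReal.toReal_ofReal (add_nonneg zero_le_one (tsum_nonneg (gser_nonneg n)))



-- basic exp tools
lemma pow_le_exp_of_nonneg {x : ℝ} (hx : 0 ≤ x) (m : ℕ) (hm : m ≠ 0) :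
    (1 + x/m)^m ≤ Real.exp x := by
  have hm' : (0:ℝ) < m := by positivity
  have h1 : 1 + x/m ≤ Real.exp (x/m) := by
    have := Real.add_one_le_exp (x/m)
    linarith
  calc (1 + x/m)^m ≤ (Real.exp (x/m))^m := by
        apply pow_le_pow_left₀ (by positivity) h1
    _ = Real.exp x := by
        rw [← Real.exp_nat_mul]
        congr 1
        field_simp
lemma exp_nat_lb (k : ℕ) : (2.7182818283:ℝ)^k ≤ Real.exp k := by
  calc (2.7182818283:ℝ)^k ≤ (Real.exp 1)^k :=
        pow_le_pow_left₀ (by norm_num) Real.exp_one_gt_d9.le k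
    _ = Real.exp k := by rw [← Real.exp_nat_mul, mul_one]

lemma exp_neg_le {t c : ℝ} (hc : 0 < c) (h : 1/c ≤ Real.exp t) : Real.exp (-t) ≤ c := by
  rw [Real.exp_neg, inv_le_comm₀ (Real.exp_pos t) hc, ← one_div]
  exact h

-- exp(π) ≥ 23.11  hence exp(-π) ≤ 0.0433
lemma exp_pi_lb : (23.11:ℝ) ≤ Real.exp π := by
  have h1 : (3.141592:ℝ) ≤ π := by
    have := Real.pi_gt_d6; linarith
  have h2 : Real.exp (3.141592:ℝ) ≤ Real.exp π := Real.exp_le_exp.mpr h1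
  have h3 : Real.exp (3.141592:ℝ) = Real.exp 3 * Real.exp 0.141592 := by
    rw [← Real.exp_add]; norm_num
  have h4 : (20.0855369:ℝ) ≤ Real.exp 3 := by
    have := exp_nat_lb 3
    norm_num at this ⊢
    linarith
  have h5 : ((1:ℝ) + 0.141592/8)^(8:ℕ) ≤ Real.exp 0.141592 :=
    pow_le_exp_of_nonneg (by norm_num) 8 (by norm_num)
  have h6 : (1.15058:ℝ) ≤ ((1:ℝ) + 0.141592/8)^(8:ℕ) := by norm_num
  have : (20.0855369:ℝ) * 1.15058 ≤ Real.exp 3 * Real.exp 0.141592 := by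
    apply mul_le_mul h4 (le_trans h6 h5) (by norm_num) (Real.exp_pos 3).le
  rw [← h3] at this
  nlinarith
lemma exp_neg_pi : Real.exp (-π) ≤ 0.0433 := by
  apply exp_neg_le (by norm_num)
  calc (1:ℝ)/0.0433 ≤ 23.11 := by norm_num
    _ ≤ Real.exp π := exp_pi_lb

-- exp(9π/4) ≥ 1174 hence exp(-9π/4) ≤ 0.000852
lemma exp_9pi4_lb : (1174:ℝ) ≤ Real.exp (9*π/4) := by
  have h1 : (7.068582:ℝ) ≤ 9*π/4 := by
    have := Real.pi_gt_d6; linarith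
  have h2 : Real.exp (7.068582:ℝ) ≤ Real.exp (9*π/4) := Real.exp_le_exp.mpr h1
  have h3 : Real.exp (7.068582:ℝ) = Real.exp 7 * Real.exp 0.068582 := by
    rw [← Real.exp_add]; norm_num
  have h4 : (1096.633:ℝ) ≤ Real.exp 7 := by
    have := exp_nat_lb 7
    norm_num at this ⊢
    linarith
  have h5 : ((1:ℝ) + 0.068582/8)^(8:ℕ) ≤ Real.exp 0.068582 :=
    pow_le_exp_of_nonneg (by norm_num) 8 (by norm_num)
  have h6 : (1.0706:ℝ) ≤ ((1:ℝ) + 0.068582/8)^(8:ℕ) := by norm_num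
  have : (1096.633:ℝ) * 1.0706 ≤ Real.exp 7 * Real.exp 0.068582 := by
    apply mul_le_mul h4 (le_trans h6 h5) (by norm_num) (Real.exp_pos 7).le
  rw [← h3] at this
  nlinarith
lemma exp_neg_9pi4 : Real.exp (-(9*π/4)) ≤ 0.000852 := by
  apply exp_neg_le (by norm_num)
  calc (1:ℝ)/0.000852 ≤ 1174 := by norm_num
    _ ≤ Real.exp (9*π/4) := exp_9pi4_lb

lemma exp_neg_ten : Real.exp (-(10:ℝ)) ≤ 0.0000455 := by
  apply exp_neg_le (by norm_num)
  have := exp_nat_lb 10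
  norm_num at this ⊢
  linarith
lemma exp_neg_one : Real.exp (-(1:ℝ)) ≤ 0.37 := by
  apply exp_neg_le (by norm_num)
  have := exp_nat_lb 1
  norm_num at this ⊢
  linarith
lemma exp_neg_three : Real.exp (-(3:ℝ)) ≤ 0.05 := by
  apply exp_neg_le (by norm_num)
  have := exp_nat_lb 3
  norm_num at this ⊢
  linarith
lemma exp_neg_four : Real.exp (-(4:ℝ)) ≤ 0.02 := by
  apply exp_neg_le (by norm_num)
  have := exp_nat_lb 4
  norm_num at this ⊢
  linarith


-- log t ≤ t / e
lemma log_le_div_e {t : ℝ} (ht : 0 < t) : Real.log t ≤ t / Real.exp 1 := by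
  have he : (0:ℝ) < Real.exp 1 := Real.exp_pos 1
  have h := Real.log_le_sub_one_of_pos (show 0 < t / Real.exp 1 by positivity)
  rw [Real.log_div ht.ne' he.ne', Real.log_exp] at h
  linarith

-- a^n ≤ n^(n/2) * exp(a²/(2e))
lemma pow_le_rpow_mul_exp {n : ℕ} (hn : 0 < n) {a : ℝ} (ha : 0 < a) :
    a^n ≤ (n:ℝ)^((n:ℝ)/2) * Real.exp (a^2/(2*Real.exp 1)) := by
  have hN : (0:ℝ) < n := by exact_mod_cast hn
  have he : (0:ℝ) < Real.exp 1 := Real.exp_pos 1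
  have ht : (0:ℝ) < a^2 / (n:ℝ) := by positivity
  have hlog := log_le_div_e ht
  have hlog2 : Real.log (a^2 / n) = 2 * Real.log a - Real.log n := by
    rw [Real.log_div (by positivity) hN.ne', Real.log_pow]
    push_cast; ring
  have key : (n:ℝ) * Real.log a ≤ ((n:ℝ)/2) * Real.log n + a^2/(2*Real.exp 1) := by
    have h2 : ((n:ℝ)/2) * Real.log (a^2/n) ≤ ((n:ℝ)/2) * (a^2/n / Real.exp 1) := by
      apply mul_le_mul_of_nonneg_left hlog (by positivity)
    rw [hlog2] at h2
    have h3 : ((n:ℝ)/2) * (a^2/n / Real.exp 1) = a^2/(2*Real.exp 1) := by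
      field_simp
    rw [h3] at h2
    linarith
  have hLHS : a^n = Real.exp ((n:ℝ) * Real.log a) := by
    rw [← Real.log_pow, Real.exp_log (by positivity)]
  have hRHS : (n:ℝ)^((n:ℝ)/2) * Real.exp (a^2/(2*Real.exp 1)) =
      Real.exp (((n:ℝ)/2) * Real.log n + a^2/(2*Real.exp 1)) := by
    rw [Real.exp_add, Real.rpow_def_of_pos hN]
    ring_nf
  rw [hLHS, hRHS]
  exact Real.exp_le_exp.mpr key

lemma gser_le_useq {n : ℕ} (hn : 0 < n) (k : ℕ) :
    gser n k ≤ (n:ℝ)^((n:ℝ)/2) * useq k := by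
  unfold gser useq
  have h1 : ((k:ℝ)+4)^n ≤ (n:ℝ)^((n:ℝ)/2) * Real.exp (((k:ℝ)+4)^2/(2*Real.exp 1)) :=
    pow_le_rpow_mul_exp hn (by positivity)
  calc ((k:ℝ)+4)^n * Real.exp (-π * (1 + (k:ℝ)/2)^2)
      ≤ ((n:ℝ)^((n:ℝ)/2) * Real.exp (((k:ℝ)+4)^2/(2*Real.exp 1))) *
        Real.exp (-π * (1 + (k:ℝ)/2)^2) := by
        apply mul_le_mul_of_nonneg_right h1 (Real.exp_pos _).le
    _ = (n:ℝ)^((n:ℝ)/2) * Real.exp (((k:ℝ)+4)^2/(2*Real.exp 1) - π * (1 + (k:ℝ)/2)^2) := by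
        rw [mul_assoc, ← Real.exp_add]
        ring_nf

lemma two_e_lb : (5.43:ℝ) ≤ 2 * Real.exp 1 := by
  have := Real.exp_one_gt_d9; linarith

lemma useq_le_geom (k : ℕ) : useq k ≤ (Real.exp (-1))^k := by
  unfold useq
  rw [← Real.exp_nat_mul]
  apply Real.exp_le_exp.mpr
  have hx : (0:ℝ) ≤ (k:ℝ) := Nat.cast_nonneg k
  have he := two_e_lb
  have hpi : (3.141592:ℝ) ≤ π := by have := Real.pi_gt_d6; linarith
  have h2e : (0:ℝ) < 2 * Real.exp 1 := by positivity
  have hdiv : ((k:ℝ)+4)^2/(2*Real.exp 1) ≤ 0.1842*((k:ℝ)+4)^2 := by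
    rw [div_le_iff₀ h2e]
    nlinarith [sq_nonneg ((k:ℝ)+4)]
  have hpi2 : (3.141592:ℝ) * (1 + (k:ℝ)/2)^2 ≤ π * (1 + (k:ℝ)/2)^2 := by
    apply mul_le_mul_of_nonneg_right hpi (by positivity)
  nlinarith [sq_nonneg ((k:ℝ))]

lemma useq_tail (k : ℕ) : useq (k+3) ≤ Real.exp (-(10:ℝ)) * (Real.exp (-1))^k := by
  unfold useq
  rw [← Real.exp_nat_mul, ← Real.exp_add]
  apply Real.exp_le_exp.mpr
  have hx : (0:ℝ) ≤ (k:ℝ) := Nat.cast_nonneg k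
  have he := two_e_lb
  have hpi : (3.141592:ℝ) ≤ π := by have := Real.pi_gt_d6; linarith
  push_cast
  have h2e : (0:ℝ) < 2 * Real.exp 1 := by positivity
  have hdiv : ((k:ℝ)+3+4)^2/(2*Real.exp 1) ≤ 0.1842*((k:ℝ)+7)^2 := by
    rw [show ((k:ℝ)+3+4) = (k:ℝ)+7 by ring]
    rw [div_le_iff₀ h2e]
    nlinarith [sq_nonneg ((k:ℝ)+7)]
  have hpi2 : (3.141592:ℝ) * (1 + ((k:ℝ)+3)/2)^2 ≤ π * (1 + ((k:ℝ)+3)/2)^2 := by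
    apply mul_le_mul_of_nonneg_right hpi (by positivity)
  nlinarith [sq_nonneg ((k:ℝ))]

lemma summable_useq : Summable useq := by
  apply Summable.of_nonneg_of_le (fun k => (Real.exp_pos _).le) useq_le_geom
  apply summable_geometric_of_lt_one (Real.exp_pos _).le
  exact Real.exp_lt_one_iff.mpr (by norm_num)

lemma summable_gser {n : ℕ} (hn : 0 < n) : Summable (gser n) := by
  apply Summable.of_nonneg_of_le (fun k => by unfold gser; positivity) (gser_le_useq hn)
  exact summable_useq.mul_left _



lemma useq_nonneg (k : ℕ) : 0 ≤ useq k := (Real.exp_pos _).le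

-- geometric tail tool
lemma tsum_tail_le {c r : ℝ} (hc : 0 ≤ c) (hr0 : 0 ≤ r) (hr1 : r < 1) {f : ℕ → ℝ}
    (hf : ∀ k, 0 ≤ f k) (hle : ∀ k, f k ≤ c * r^k) : ∑' k, f k ≤ c * (1-r)⁻¹ := by
  have hgs : Summable (fun k : ℕ => c * r^k) :=
    (summable_geometric_of_lt_one hr0 hr1).mul_left c
  calc ∑' k, f k ≤ ∑' k, c * r^k :=
        Summable.tsum_le_tsum hle (Summable.of_nonneg_of_le hf hle hgs) hgs
    _ = c * (1-r)⁻¹ := by rw [tsum_mul_left, tsum_geometric_of_lt_one hr0 hr1]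

lemma useq0_le : useq 0 ≤ 0.8206 := by
  have he := Real.exp_one_gt_d9
  have hpi : (3.141592:ℝ) ≤ π := Real.pi_gt_d6.le
  have h2e : (0:ℝ) < 2*Real.exp 1 := by positivity
  have hval : useq 0 = Real.exp (16/(2*Real.exp 1) - π * 1) := by
    unfold useq; norm_num
  have h8 : (16:ℝ)/(2*Real.exp 1) ≤ 2.9430356 := by
    rw [div_le_iff₀ h2e]; nlinarith
  have harg : 16/(2*Real.exp 1) - π * 1 ≤ -(0.1985564:ℝ) := by nlinarith
  calc useq 0 ≤ Real.exp (-(0.1985564:ℝ)) := by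
        rw [hval]; exact Real.exp_le_exp.mpr harg
    _ ≤ 0.8206 := by
        apply exp_neg_le (by norm_num)
        calc (1:ℝ)/0.8206 ≤ (1 + 0.1985564/32)^(32:ℕ) := by norm_num
          _ ≤ Real.exp 0.1985564 := pow_le_exp_of_nonneg (by norm_num) 32 (by norm_num)

lemma useq1_le : useq 1 ≤ 0.0856 := by
  have he := Real.exp_one_gt_d9
  have hpi : (3.141592:ℝ) ≤ π := Real.pi_gt_d6.le
  have h2e : (0:ℝ) < 2*Real.exp 1 := by positivity
  have hval : useq 1 = Real.exp (25/(2*Real.exp 1) - π * (9/4)) := by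
    unfold useq; norm_num
  have h8 : (25:ℝ)/(2*Real.exp 1) ≤ 4.5984932 := by
    rw [div_le_iff₀ h2e]; nlinarith
  have harg : 25/(2*Real.exp 1) - π * (9/4) ≤ -(2.4700888:ℝ) := by nlinarith
  calc useq 1 ≤ Real.exp (-(2.4700888:ℝ)) := by
        rw [hval]; exact Real.exp_le_exp.mpr harg
    _ ≤ 0.0856 := by
        apply exp_neg_le (by norm_num)
        calc (1:ℝ)/0.0856 ≤ (1 + 2.4700888/256)^(256:ℕ) := by norm_num
          _ ≤ Real.exp 2.4700888 := pow_le_exp_of_nonneg (by norm_num) 256 (by norm_num)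

lemma useq2_le : useq 2 ≤ 0.0029 := by
  have he := Real.exp_one_gt_d9
  have hpi : (3.141592:ℝ) ≤ π := Real.pi_gt_d6.le
  have h2e : (0:ℝ) < 2*Real.exp 1 := by positivity
  have hval : useq 2 = Real.exp (36/(2*Real.exp 1) - π * 4) := by
    unfold useq; norm_num
  have h8 : (36:ℝ)/(2*Real.exp 1) ≤ 6.6218344 := by
    rw [div_le_iff₀ h2e]; nlinarith
  have harg : 36/(2*Real.exp 1) - π * 4 ≤ -(5.9445336:ℝ) := by nlinarith
  calc useq 2 ≤ Real.exp (-(5.9445336:ℝ)) := by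
        rw [hval]; exact Real.exp_le_exp.mpr harg
    _ ≤ 0.0029 := by
        apply exp_neg_le (by norm_num)
        calc (1:ℝ)/0.0029 ≤ (1 + 5.9445336/256)^(256:ℕ) := by norm_num
          _ ≤ Real.exp 5.9445336 := pow_le_exp_of_nonneg (by norm_num) 256 (by norm_num)

lemma tsum_useq_le : ∑' k, useq k ≤ 0.92 := by
  have hsum := summable_useq
  have hsplit := Summable.sum_add_tsum_nat_add (f := useq) 3 hsum
  have htail : ∑' k, useq (k+3) ≤ Real.exp (-(10:ℝ)) * (1 - Real.exp (-1))⁻¹ :=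
    tsum_tail_le (Real.exp_pos _).le (Real.exp_pos _).le
      (Real.exp_lt_one_iff.mpr (by norm_num)) (f := fun k => useq (k+3))
      (fun k => useq_nonneg _) useq_tail
  have hb1 : (1 - Real.exp (-1))⁻¹ ≤ (0.63:ℝ)⁻¹ := by
    apply inv_anti₀ (by norm_num)
    linarith [exp_neg_one]
  have htail2 : ∑' k, useq (k+3) ≤ 0.000073 := by
    calc ∑' k, useq (k+3) ≤ Real.exp (-(10:ℝ)) * (1 - Real.exp (-1))⁻¹ := htail
      _ ≤ 0.0000455 * (0.63:ℝ)⁻¹ := by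
          apply mul_le_mul exp_neg_ten hb1
            (inv_nonneg.mpr (by linarith [exp_neg_one])) (by norm_num)
      _ ≤ 0.000073 := by norm_num
  have hhead : ∑ i ∈ Finset.range 3, useq i ≤ 0.8206 + 0.0856 + 0.0029 := by
    rw [Finset.sum_range_succ, Finset.sum_range_succ, Finset.sum_range_one]
    linarith [useq0_le, useq1_le, useq2_le]
  have : ∑' k, useq k = ∑ i ∈ Finset.range 3, useq i + ∑' k, useq (k+3) := by
    rw [hsplit]
  rw [this]
  linarith

lemma Minv_pos : (0:ℝ) < 1 - 1/(2*π) := by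
  have := Real.pi_gt_d6
  have h2 : (6:ℝ) < 2*π := by linarith
  have : 1/(2*π) < 1/6 := by
    apply one_div_lt_one_div_of_lt (by norm_num) h2
  linarith

lemma Minv_lb : (1.18927:ℝ) ≤ (1 - 1/(2*π))⁻¹ := by
  have hpiu := Real.pi_lt_d6
  have hpil := Real.pi_gt_d6
  have h1 : (0:ℝ) < 1 - 1/(2*π) := Minv_pos
  have h2 : 1 - 1/(2*π) ≤ 0.8408452 := by
    have : (0.1591548:ℝ) ≤ 1/(2*π) := by
      rw [le_div_iff₀ (by linarith : (0:ℝ) < 2*π)]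
      nlinarith
    linarith
  calc (1.18927:ℝ) ≤ (0.8408452:ℝ)⁻¹ := by norm_num
    _ ≤ (1 - 1/(2*π))⁻¹ := inv_anti₀ h1 h2



-- tail bounds for n = 1 and n = 2
lemma gser1_tail (k : ℕ) :
    gser 1 (k+1) ≤ (5 * Real.exp (-(9*π/4))) * (Real.exp (-4))^k := by
  have hpi : (3.141592:ℝ) ≤ π := Real.pi_gt_d6.le
  have hx : (0:ℝ) ≤ (k:ℝ) := Nat.cast_nonneg k
  have h1 : ((k:ℝ)+1)+4 ≤ 5 * Real.exp ((k:ℝ)/5) := by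
    have := Real.add_one_le_exp ((k:ℝ)/5)
    nlinarith [Real.exp_pos ((k:ℝ)/5)]
  have hπk : 3.141592*(k:ℝ) ≤ π*(k:ℝ) := mul_le_mul_of_nonneg_right hpi hx
  have hπk2 : (0:ℝ) ≤ π*(k:ℝ)^2 := by positivity
  have h2 : Real.exp (-π * (1 + ((k:ℝ)+1)/2)^2) ≤ Real.exp (-(9*π/4) - 21*(k:ℝ)/5) := by
    apply Real.exp_le_exp.mpr
    nlinarith [hπk, hπk2]
  have hcomb : gser 1 (k+1) ≤ (5 * Real.exp ((k:ℝ)/5)) * Real.exp (-(9*π/4) - 21*(k:ℝ)/5) := by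
    unfold gser
    push_cast
    rw [pow_one]
    exact mul_le_mul h1 h2 (Real.exp_pos _).le (by positivity)
  calc gser 1 (k+1) ≤ (5 * Real.exp ((k:ℝ)/5)) * Real.exp (-(9*π/4) - 21*(k:ℝ)/5) := hcomb
    _ = (5 * Real.exp (-(9*π/4))) * Real.exp (-4*(k:ℝ)) := by
        rw [mul_assoc, mul_assoc, ← Real.exp_add, ← Real.exp_add]
        ring_nf
    _ = (5 * Real.exp (-(9*π/4))) * (Real.exp (-4))^k := by
        rw [← Real.exp_nat_mul]
        ring_nf

lemma gser2_tail (k : ℕ) :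
    gser 2 (k+1) ≤ (25 * Real.exp (-(9*π/4))) * (Real.exp (-3))^k := by
  have hpi : (3.141592:ℝ) ≤ π := Real.pi_gt_d6.le
  have hx : (0:ℝ) ≤ (k:ℝ) := Nat.cast_nonneg k
  have h1 : (((k:ℝ)+1)+4)^2 ≤ 25 * Real.exp (2*(k:ℝ)/5) := by
    have he1 : 1 + (k:ℝ)/5 ≤ Real.exp ((k:ℝ)/5) := by
      have := Real.add_one_le_exp ((k:ℝ)/5); linarith
    have he2 : (1 + (k:ℝ)/5)^2 ≤ (Real.exp ((k:ℝ)/5))^2 :=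
      pow_le_pow_left₀ (by positivity) he1 2
    have he3 : (Real.exp ((k:ℝ)/5))^2 = Real.exp (2*(k:ℝ)/5) := by
      rw [← Real.exp_nat_mul]; ring_nf
    nlinarith
  have hπk : 3.141592*(k:ℝ) ≤ π*(k:ℝ) := mul_le_mul_of_nonneg_right hpi hx
  have hπk2 : (0:ℝ) ≤ π*(k:ℝ)^2 := by positivity
  have h2 : Real.exp (-π * (1 + ((k:ℝ)+1)/2)^2) ≤ Real.exp (-(9*π/4) - 21*(k:ℝ)/5) := by
    apply Real.exp_le_exp.mpr
    nlinarith [hπk, hπk2]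
  have hcomb : gser 2 (k+1) ≤ (25 * Real.exp (2*(k:ℝ)/5)) * Real.exp (-(9*π/4) - 21*(k:ℝ)/5) := by
    unfold gser
    push_cast
    exact mul_le_mul h1 h2 (Real.exp_pos _).le (by positivity)
  calc gser 2 (k+1) ≤ (25 * Real.exp (2*(k:ℝ)/5)) * Real.exp (-(9*π/4) - 21*(k:ℝ)/5) := hcomb
    _ = (25 * Real.exp (-(9*π/4))) * Real.exp (-19*(k:ℝ)/5) := by
        rw [mul_assoc, mul_assoc, ← Real.exp_add, ← Real.exp_add]
        ring_nf
    _ ≤ (25 * Real.exp (-(9*π/4))) * (Real.exp (-3))^k := by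
        apply mul_le_mul_of_nonneg_left _ (by positivity)
        rw [← Real.exp_nat_mul]
        apply Real.exp_le_exp.mpr
        nlinarith

lemma case_main {n : ℕ} (hn : 0 < n) :
    1 + ∑' k, gser n k ≤ (1 - 1/(2*π))⁻¹ * (n:ℝ)^((n:ℝ)/2) := by
  have hMlb := Minv_lb
  have hMpos := Minv_pos
  match n, hn with
  | 1, _ =>
    have hg0 : gser 1 0 = 4 * Real.exp (-π) := by unfold gser; norm_num
    have hsplit := Summable.sum_add_tsum_nat_add (f := gser 1) 1 (summable_gser one_pos)
    have htail : ∑' k, gser 1 (k+1) ≤ (5 * Real.exp (-(9*π/4))) * (1 - Real.exp (-4))⁻¹ :=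
      tsum_tail_le (by positivity) (Real.exp_pos _).le
        (Real.exp_lt_one_iff.mpr (by norm_num)) (f := fun k => gser 1 (k+1))
        (fun k => gser_nonneg _ _) gser1_tail
    have htail2 : ∑' k, gser 1 (k+1) ≤ 0.00435 := by
      have hb : (1 - Real.exp (-4))⁻¹ ≤ (0.98:ℝ)⁻¹ :=
        inv_anti₀ (by norm_num) (by linarith [exp_neg_four])
      calc ∑' k, gser 1 (k+1) ≤ (5 * Real.exp (-(9*π/4))) * (1 - Real.exp (-4))⁻¹ := htail
        _ ≤ (5 * 0.000852) * (0.98:ℝ)⁻¹ := by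
            apply mul_le_mul (by linarith [exp_neg_9pi4]) hb
              (inv_nonneg.mpr (by linarith [exp_neg_four])) (by norm_num)
        _ ≤ 0.00435 := by norm_num
    have hsum : ∑' k, gser 1 k ≤ 0.1732 + 0.00435 := by
      rw [← hsplit, Finset.sum_range_one, hg0]
      have := exp_neg_pi
      linarith
    have hP : ((1:ℕ):ℝ)^(((1:ℕ):ℝ)/2) = 1 := by norm_num
    rw [hP]
    linarith
  | 2, _ =>
    have hg0 : gser 2 0 = 16 * Real.exp (-π) := by
      unfold gser; norm_num
    have hsplit := Summable.sum_add_tsum_nat_add (f := gser 2) 1 (summable_gser two_pos)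
    have htail : ∑' k, gser 2 (k+1) ≤ (25 * Real.exp (-(9*π/4))) * (1 - Real.exp (-3))⁻¹ :=
      tsum_tail_le (by positivity) (Real.exp_pos _).le
        (Real.exp_lt_one_iff.mpr (by norm_num)) (f := fun k => gser 2 (k+1))
        (fun k => gser_nonneg _ _) gser2_tail
    have htail2 : ∑' k, gser 2 (k+1) ≤ 0.02243 := by
      have hb : (1 - Real.exp (-3))⁻¹ ≤ (0.95:ℝ)⁻¹ :=
        inv_anti₀ (by norm_num) (by linarith [exp_neg_three])
      calc ∑' k, gser 2 (k+1) ≤ (25 * Real.exp (-(9*π/4))) * (1 - Real.exp (-3))⁻¹ := htail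
        _ ≤ (25 * 0.000852) * (0.95:ℝ)⁻¹ := by
            apply mul_le_mul (by linarith [exp_neg_9pi4]) hb
              (inv_nonneg.mpr (by linarith [exp_neg_three])) (by norm_num)
        _ ≤ 0.02243 := by norm_num
    have hsum : ∑' k, gser 2 k ≤ 0.6928 + 0.02243 := by
      rw [← hsplit, Finset.sum_range_one, hg0]
      have := exp_neg_pi
      linarith
    have hP : ((2:ℕ):ℝ)^(((2:ℕ):ℝ)/2) = 2 := by
      norm_num
    rw [hP]
    linarith
  | (m+3), _ =>
    set n := m + 3 with hn3
    have hn0 : 0 < n := by omega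
    have hP5 : (5:ℝ) ≤ (n:ℝ)^((n:ℝ)/2) := by
      have h3n : (3:ℝ) ≤ (n:ℝ) := by exact_mod_cast Nat.le_add_left 3 m
      have s1 : (3:ℝ)^((3:ℝ)/2) ≤ (3:ℝ)^((n:ℝ)/2) :=
        Real.rpow_le_rpow_of_exponent_le (by norm_num) (by linarith)
      have s2 : (3:ℝ)^((n:ℝ)/2) ≤ (n:ℝ)^((n:ℝ)/2) :=
        Real.rpow_le_rpow (by norm_num) h3n (by positivity)
      have s3 : (5:ℝ) ≤ (3:ℝ)^((3:ℝ)/2) := by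
        have hsq : ((3:ℝ)^((3:ℝ)/2))^(2:ℕ) = 27 := by
          rw [← Real.rpow_natCast ((3:ℝ)^((3:ℝ)/2)) 2, ← Real.rpow_mul (by norm_num)]
          norm_num
        nlinarith [Real.rpow_nonneg (show (0:ℝ) ≤ 3 by norm_num) ((3:ℝ)/2)]
      linarith
    have hsum : ∑' k, gser n k ≤ (n:ℝ)^((n:ℝ)/2) * 0.92 := by
      have h1 : ∑' k, gser n k ≤ ∑' k, (n:ℝ)^((n:ℝ)/2) * useq k :=
        Summable.tsum_le_tsum (gser_le_useq hn0) (summable_gser hn0) (summable_useq.mul_left _)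
      rw [tsum_mul_left] at h1
      calc ∑' k, gser n k ≤ (n:ℝ)^((n:ℝ)/2) * ∑' k, useq k := h1
        _ ≤ (n:ℝ)^((n:ℝ)/2) * 0.92 := by
            apply mul_le_mul_of_nonneg_left tsum_useq_le (by positivity)
    have hfin : 1 + (n:ℝ)^((n:ℝ)/2) * 0.92 ≤ (1 - 1/(2*π))⁻¹ * (n:ℝ)^((n:ℝ)/2) := by
      have : (1.18927:ℝ) * (n:ℝ)^((n:ℝ)/2) ≤ (1 - 1/(2*π))⁻¹ * (n:ℝ)^((n:ℝ)/2) := by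
        apply mul_le_mul_of_nonneg_right hMlb (by positivity)
      nlinarith
    linarith



/-- If `E` is a euclidean lattice of positive rank `n` with first minimum
`λ₁(E) ≥ 1` (i.e. every nonzero lattice vector has norm `≥ 1`), then
`h⁰_θ(E) ≤ −log(1 − 1/(2π)) + (n/2) log n`. -/
theorem h0theta_le_of_first_minimum_ge_one {n : ℕ} (hn : 0 < n)
    (L : Submodule ℤ (EuclideanSpace ℝ (Fin n)))
    [DiscreteTopology L] [IsZLattice ℝ L]
    (hlam : ∀ v ∈ L, v ≠ 0 → 1 ≤ ‖v‖) :
    Real.log (∑' v : L, Real.exp (-π * ‖(v : EuclideanSpace ℝ (Fin n))‖ ^ 2)) ≤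
      -Real.log (1 - 1 / (2 * π)) + ((n : ℝ) / 2) * Real.log n := by
  obtain ⟨hs, hle⟩ := shell_main hn L hlam (summable_gser hn)
  set T := ∑' v : L, Real.exp (-π * ‖(v : EuclideanSpace ℝ (Fin n))‖ ^ 2) with hT
  have hT1 : (1:ℝ) ≤ T := by
    have h0 : Real.exp (-π * ‖((0:L) : EuclideanSpace ℝ (Fin n))‖ ^ 2) = 1 := by
      simp
    calc (1:ℝ) = Real.exp (-π * ‖((0:L) : EuclideanSpace ℝ (Fin n))‖ ^ 2) := h0.symm
      _ ≤ T := Summable.le_tsum hs 0 (fun v _ => (Real.exp_pos _).le)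
  have hbound : T ≤ (1 - 1/(2*π))⁻¹ * (n:ℝ)^((n:ℝ)/2) :=
    hle.trans (case_main hn)
  have hN : (0:ℝ) < (n:ℝ) := by exact_mod_cast hn
  have hMinv : (0:ℝ) < (1 - 1/(2*π))⁻¹ := inv_pos.mpr Minv_pos
  have hP : (0:ℝ) < (n:ℝ)^((n:ℝ)/2) := Real.rpow_pos_of_pos hN _
  calc Real.log T ≤ Real.log ((1 - 1/(2*π))⁻¹ * (n:ℝ)^((n:ℝ)/2)) :=
        Real.log_le_log (by linarith) hbound
    _ = -Real.log (1 - 1/(2*π)) + ((n:ℝ)/2) * Real.log n := by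
        rw [Real.log_mul hMinv.ne' hP.ne', Real.log_inv, Real.log_rpow hN]
end

section
/- Let D be a countable set and (μ_i)_{i∈N} a sequence of finite nonnegative measures on D. If there exists a summable sequence (t_i)_{i∈N} of nonnegative reals such that μ_{i+1} ≤ e^{t_i} μ_i pointwise for all i, then the sequence (μ_i) converges in total-variation norm to a finite nonnegative measure μ on D. -/
open Filter Finset

/-- Let `D` be a countable set and `(μ_i)` a sequence of finite nonnegative
measures on `D` (identified with nonnegative summable families). If there exists a summable
sequence `(t_i)` of nonnegative reals such that `μ_{i+1} ≤ e^{t_i} μ_i` pointwise for all `i`,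
then `(μ_i)` converges in total-variation (`ℓ¹`) norm to a finite nonnegative measure `μ`
on `D`. -/
theorem convergence_of_measures_on_countable {D : Type*} [Countable D]
    (μ : ℕ → D → ℝ)
    (hnn : ∀ i x, 0 ≤ μ i x) (hsummable : ∀ i, Summable (μ i))
    (t : ℕ → ℝ) (ht0 : ∀ i, 0 ≤ t i) (htsum : Summable t)
    (hle : ∀ i x, μ (i + 1) x ≤ Real.exp (t i) * μ i x) :
    ∃ ν : D → ℝ, (∀ x, 0 ≤ ν x) ∧ Summable ν ∧
      Filter.Tendsto (fun i => ∑' x, |μ i x - ν x|) Filter.atTop (nhds 0) := by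
  set T : ℝ := ∑' i, t i with hT
  set S : ℕ → ℝ := fun i => ∑ j ∈ Finset.range i, t j with hS
  have hST : ∀ i, S i ≤ T := fun i =>
    Summable.sum_le_tsum (Finset.range i) (fun j _ => ht0 j) htsum
  set b : ℕ → D → ℝ := fun i x => μ i x * Real.exp (-(S i)) with hb
  have hbnn : ∀ i x, 0 ≤ b i x := fun i x =>
    mul_nonneg (hnn i x) (Real.exp_pos _).le
  have hbanti : ∀ x, Antitone fun i => b i x := by
    intro x
    apply antitone_nat_of_succ_le
    intro i
    have : S (i + 1) = S i + t i := Finset.sum_range_succ t i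
    simp only [hb, this, neg_add, Real.exp_add]
    calc μ (i + 1) x * (Real.exp (-(S i)) * Real.exp (-(t i)))
        ≤ Real.exp (t i) * μ i x * (Real.exp (-(S i)) * Real.exp (-(t i))) := by
          apply mul_le_mul_of_nonneg_right (hle i x)
          positivity
      _ = μ i x * Real.exp (-(S i)) := by
          rw [← Real.exp_add, mul_comm (Real.exp (t i))]
          ring_nf
          rw [mul_assoc, ← Real.exp_add]
          simp
  set ν' : D → ℝ := fun x => ⨅ i, b i x with hν'
  have hbdd : ∀ x, BddBelow (Set.range fun i => b i x) :=
    fun x => ⟨0, fun y ⟨i, hi⟩ => hi ▸ hbnn i x⟩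
  have hν'nn : ∀ x, 0 ≤ ν' x := fun x => le_ciInf (fun i => hbnn i x)
  have hν'le : ∀ x, ν' x ≤ μ 0 x := by
    intro x
    refine le_trans (ciInf_le (hbdd x) 0) ?_
    simp [hb, hS]
  have hbtend : ∀ x, Tendsto (fun i => b i x) atTop (nhds (ν' x)) :=
    fun x => tendsto_atTop_ciInf (hbanti x) (hbdd x)
  have hStend : Tendsto (fun i => Real.exp (S i)) atTop (nhds (Real.exp T)) :=
    (Real.continuous_exp.tendsto T).comp htsum.hasSum.tendsto_sum_nat
  set ν : D → ℝ := fun x => ν' x * Real.exp T with hν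
  have hμeq : ∀ i x, μ i x = b i x * Real.exp (S i) := by
    intro i x
    simp only [hb, mul_assoc, ← Real.exp_add]
    simp
  have hμtend : ∀ x, Tendsto (fun i => μ i x) atTop (nhds (ν x)) := by
    intro x
    simp only [funext fun i => hμeq i x]
    exact (hbtend x).mul hStend
  have hμbound : ∀ i x, μ i x ≤ Real.exp T * μ 0 x := by
    intro i x
    rw [hμeq i x]
    calc b i x * Real.exp (S i) ≤ b 0 x * Real.exp T := by
          apply mul_le_mul (hbanti x (Nat.zero_le i)) (Real.exp_le_exp.2 (hST i))
            (Real.exp_pos _).le (hbnn 0 x)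
      _ = Real.exp T * μ 0 x := by simp [hb, hS, mul_comm]
  have hνbound : ∀ x, ν x ≤ Real.exp T * μ 0 x := by
    intro x
    calc ν' x * Real.exp T ≤ μ 0 x * Real.exp T :=
          mul_le_mul_of_nonneg_right (hν'le x) (Real.exp_pos _).le
      _ = Real.exp T * μ 0 x := mul_comm _ _
  have hνnn : ∀ x, 0 ≤ ν x := fun x => mul_nonneg (hν'nn x) (Real.exp_pos _).le
  have hbound_sum : Summable (fun x => 2 * (Real.exp T * μ 0 x)) :=
    (((hsummable 0).mul_left _).mul_left 2)
  refine ⟨ν, hνnn, ?_, ?_⟩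
  · exact (hsummable 0).mul_left (Real.exp T) |>.of_nonneg_of_le hνnn hνbound
  · have := tendsto_tsum_of_dominated_convergence (f := fun i x => |μ i x - ν x|)
      (g := fun _ => (0 : ℝ)) (bound := fun x => 2 * (Real.exp T * μ 0 x)) hbound_sum
      (fun x => by
        have : Tendsto (fun i => μ i x - ν x) atTop (nhds 0) := by
          have h2 := (hμtend x).sub (tendsto_const_nhds (x := ν x) (f := atTop))
          simpa using h2
        simpa using this.abs)
      (Filter.Eventually.of_forall fun i x => by
        rw [Real.norm_eq_abs, abs_abs]
        calc |μ i x - ν x| ≤ |μ i x| + |ν x| := abs_sub _ _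
          _ = μ i x + ν x := by rw [abs_of_nonneg (hnn i x), abs_of_nonneg (hνnn x)]
          _ ≤ Real.exp T * μ 0 x + Real.exp T * μ 0 x :=
              add_le_add (hμbound i x) (hνbound x)
          _ = 2 * (Real.exp T * μ 0 x) := by ring)
    simpa using this
end
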